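/- arXiv:1605.00039 — 13 statements merged into one kernel-verified Lean document; each statement's English description precedes it below -/
import Mathlib

section
/- The function c ↦ ξ(c) is differentiable on (0, ∞) with ξ′(c) = (θ/2)·(η² − ξ(c)²)/ξ(c)² for every c > 0, and it is twice differentiable with ξ″(c) = −(θ²η²/2)·(η² − ξ(c)²)/ξ(c)⁵ for every c > 0. -/
open Real Filter Set

/-- Differentiability of the unique zero `ξ(c)` of
`F_c(x) = 2x + θc − η log((η+x)/(η−x))` in `(0, η)`, with explicit
first and second derivatives. -/
theorem stmt_2 (η θ : ℝ) (hη : 0 < η) (hθ : 0 < θ) (ξ : ℝ → ℝ)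
    (hξ : ∀ c : ℝ, 0 < c → ξ c ∈ Set.Ioo 0 η ∧
      2 * ξ c + θ * c - η * Real.log ((η + ξ c) / (η - ξ c)) = 0) :
    ∀ c : ℝ, 0 < c →
      HasDerivAt ξ ((θ / 2) * (η ^ 2 - (ξ c) ^ 2) / (ξ c) ^ 2) c ∧
      HasDerivAt (fun c => (θ / 2) * (η ^ 2 - (ξ c) ^ 2) / (ξ c) ^ 2)
        (-(θ ^ 2 * η ^ 2 / 2) * (η ^ 2 - (ξ c) ^ 2) / (ξ c) ^ 5) c := by
  set g : ℝ → ℝ := fun x => (η * (Real.log (η + x) - Real.log (η - x)) - 2 * x) / θ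
    with hg_def
  -- derivative of g on [0, η)
  have hgd : ∀ x ∈ Set.Ico 0 η, HasDerivAt g (2 * x ^ 2 / (θ * (η ^ 2 - x ^ 2))) x := by
    intro x hx
    have h1 : (0:ℝ) < η + x := by linarith [hx.1]
    have h2 : (0:ℝ) < η - x := by linarith [hx.2]
    have h3 : η ^ 2 - x ^ 2 ≠ 0 := by nlinarith
    have d1 : HasDerivAt (fun x => Real.log (η + x)) (1 / (η + x)) x := by
      have := ((hasDerivAt_id x).const_add η).log h1.ne'
      simpa using this
    have d2 : HasDerivAt (fun x => Real.log (η - x)) (-1 / (η - x)) x := by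
      have := ((hasDerivAt_id x).const_sub η).log h2.ne'
      simpa using this
    have := (((d1.sub d2).const_mul η).sub ((hasDerivAt_id x).const_mul 2)).div_const θ
    refine this.congr_deriv ?_
    field_simp
    ring
  have hcont : ContinuousOn g (Set.Ico 0 η) :=
    fun x hx => ((hgd x hx).continuousAt).continuousWithinAt
  have hmono : StrictMonoOn g (Set.Ico 0 η) := by
    apply strictMonoOn_of_deriv_pos (convex_Ico 0 η) hcont
    intro x hx
    rw [interior_Ico] at hx
    rw [(hgd x (Ioo_subset_Ico_self hx)).deriv]
    have h3 : 0 < η ^ 2 - x ^ 2 := by nlinarith [hx.1, hx.2]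
    apply div_pos
    · nlinarith [hx.1]
    · nlinarith
  -- g is a left inverse relation: g (ξ c) = c
  have hgξ : ∀ c, 0 < c → g (ξ c) = c := by
    intro c hc
    obtain ⟨hmem, heq⟩ := hξ c hc
    have h1 : 0 < η + ξ c := by linarith [hmem.1]
    have h2 : 0 < η - ξ c := by linarith [hmem.2]
    rw [Real.log_div h1.ne' h2.ne'] at heq
    simp only [hg_def]
    field_simp
    linarith
  -- continuity of ξ
  have hcontξ : ∀ c, 0 < c → ContinuousAt ξ c := by
    intro c hc
    obtain ⟨hmem, -⟩ := hξ c hc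
    rw [ContinuousAt, Metric.tendsto_nhds]
    intro ε hε
    set x₀ := ξ c with hx₀def
    have hx0 : 0 < x₀ := hmem.1
    have hx1 : x₀ < η := hmem.2
    set a := max (x₀ - ε) (x₀ / 2) with ha_def
    set b := min (x₀ + ε) ((x₀ + η) / 2) with hb_def
    have ha1 : 0 < a := lt_max_of_lt_right (by linarith)
    have ha2 : a < x₀ := max_lt (by linarith) (by linarith)
    have hb1 : x₀ < b := lt_min (by linarith) (by linarith)
    have hb2 : b < η := min_lt_of_right_lt (by linarith)
    have haI : a ∈ Set.Ico 0 η := ⟨ha1.le, by linarith⟩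
    have hbI : b ∈ Set.Ico 0 η := ⟨by linarith, hb2⟩
    have hxI : x₀ ∈ Set.Ico 0 η := ⟨hx0.le, hx1⟩
    have hga : g a < c := by rw [← hgξ c hc]; exact hmono haI hxI ha2
    have hgb : c < g b := by rw [← hgξ c hc]; exact hmono hxI hbI hb1
    have hopen : IsOpen (Set.Ioo (g a) (g b) ∩ Set.Ioi 0) := isOpen_Ioo.inter isOpen_Ioi
    filter_upwards [hopen.mem_nhds ⟨⟨hga, hgb⟩, hc⟩] with y hy
    obtain ⟨⟨hy1, hy2⟩, hy3⟩ := hy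
    obtain ⟨hymem, -⟩ := hξ y hy3
    have hyI : ξ y ∈ Set.Ico 0 η := ⟨hymem.1.le, hymem.2⟩
    have hgy : g (ξ y) = y := hgξ y hy3
    have h5 : a < ξ y := by
      by_contra h
      push_neg at h
      have := hmono.monotoneOn hyI haI h
      rw [hgy] at this; linarith
    have h6 : ξ y < b := by
      by_contra h
      push_neg at h
      have := hmono.monotoneOn hbI hyI h
      rw [hgy] at this; linarith
    rw [Real.dist_eq, abs_sub_lt_iff]
    constructor
    · have : b ≤ x₀ + ε := min_le_left _ _
      linarith
    · have : x₀ - ε ≤ a := le_max_left _ _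
      linarith
  -- first derivative
  have hd1 : ∀ c, 0 < c → HasDerivAt ξ ((θ / 2) * (η ^ 2 - (ξ c) ^ 2) / (ξ c) ^ 2) c := by
    intro c hc
    obtain ⟨hmem, -⟩ := hξ c hc
    have h3 : 0 < η ^ 2 - (ξ c) ^ 2 := by nlinarith [hmem.1, hmem.2]
    have hne : (2 * (ξ c) ^ 2 / (θ * (η ^ 2 - (ξ c) ^ 2))) ≠ 0 := by
      apply ne_of_gt
      apply div_pos
      · nlinarith [hmem.1]
      · nlinarith
    have hfg : ∀ᶠ y in nhds c, g (ξ y) = y := by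
      filter_upwards [isOpen_Ioi.mem_nhds hc] with y hy using hgξ y hy
    have H := HasDerivAt.of_local_left_inverse (hcontξ c hc)
      (hgd (ξ c) ⟨hmem.1.le, hmem.2⟩) hne hfg
    refine H.congr_deriv ?_
    have hξne : ξ c ≠ 0 := ne_of_gt hmem.1
    field_simp
  intro c hc
  refine ⟨hd1 c hc, ?_⟩
  obtain ⟨hmem, -⟩ := hξ c hc
  have hξne : ξ c ≠ 0 := ne_of_gt hmem.1
  have hξ' := hd1 c hc
  have hE : HasDerivAt (fun c => η ^ 2 - (ξ c) ^ 2)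
      (0 - 2 * ξ c ^ 1 * ((θ / 2) * (η ^ 2 - (ξ c) ^ 2) / (ξ c) ^ 2)) c :=
    (hasDerivAt_const c (η ^ 2)).sub (hξ'.pow 2)
  have hN := hE.const_mul (θ / 2)
  have hD : HasDerivAt (fun c => (ξ c) ^ 2)
      (2 * ξ c ^ 1 * ((θ / 2) * (η ^ 2 - (ξ c) ^ 2) / (ξ c) ^ 2)) c := hξ'.pow 2
  have H := hN.div hD (pow_ne_zero 2 hξne)
  refine H.congr_deriv ?_
  field_simp
  ring
end

section
/- As c → 0⁺ one has: ξ(c) → 0, c/ξ(c) → 0, and c·ξ′(c) → 0, where ξ′(c) = (θ/2)·(η² − ξ(c)²)/ξ(c)² is the derivative of ξ. -/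
open Real Filter Set

lemma log_lb (t : ℝ) (h0 : 0 ≤ t) (h1 : t < 1) :
    2*t + 2*t^3/3 ≤ Real.log ((1+t)/(1-t)) := by
  set f : ℝ → ℝ := fun s => Real.log (1+s) - Real.log (1-s) - 2*s - 2*s^3/3 with hf
  have key : ∀ s ∈ Set.Ioo (0:ℝ) 1, HasDerivAt f (2*s^4/((1+s)*(1-s))) s := by
    intro s hs
    obtain ⟨hs0, hs1⟩ := hs
    have h1s : (1:ℝ) + s ≠ 0 := by nlinarith
    have h2s : (1:ℝ) - s ≠ 0 := by nlinarith
    have d1 : HasDerivAt (fun u : ℝ => Real.log (1+u)) (1/(1+s)) s := by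
      have := (Real.hasDerivAt_log h1s).comp s ((hasDerivAt_id s).const_add 1)
      simpa [Function.comp_def] using this
    have d2 : HasDerivAt (fun u : ℝ => Real.log (1-u)) (-(1/(1-s))) s := by
      have := (Real.hasDerivAt_log h2s).comp s ((hasDerivAt_id s).neg.const_add 1)
      simpa [Function.comp_def] using this
    have d3 : HasDerivAt (fun u : ℝ => 2*u) (2:ℝ) s := by
      simpa using (hasDerivAt_id s).const_mul 2
    have d4 : HasDerivAt (fun u : ℝ => 2*u^3/3) (2*s^2) s := by
      have := ((hasDerivAt_pow 3 s).const_mul 2).div_const 3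
      refine this.congr_deriv ?_
      push_cast; ring
    have := ((d1.sub d2).sub d3).sub d4
    refine this.congr_deriv ?_
    field_simp
    ring
  have cont : ContinuousOn f (Set.Ico 0 1) := by
    intro s hs
    obtain ⟨hs0, hs1⟩ := hs
    have h1s : (1:ℝ) + s ≠ 0 := by nlinarith
    have h2s : (1:ℝ) - s ≠ 0 := by nlinarith
    apply ContinuousAt.continuousWithinAt
    have c1 : ContinuousAt (fun u : ℝ => Real.log (1+u)) s :=
      (Real.continuousAt_log h1s).comp (by fun_prop)
    have c2 : ContinuousAt (fun u : ℝ => Real.log (1-u)) s :=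
      (Real.continuousAt_log h2s).comp (by fun_prop)
    exact ((c1.sub c2).sub (by fun_prop)).sub (by fun_prop)
  have mono : MonotoneOn f (Set.Ico 0 1) := by
    apply monotoneOn_of_deriv_nonneg (convex_Ico 0 1) cont
    · intro s hs
      rw [interior_Ico] at hs
      exact (key s hs).differentiableAt.differentiableWithinAt
    · intro s hs
      rw [interior_Ico] at hs
      rw [(key s hs).deriv]
      obtain ⟨hs0, hs1⟩ := hs
      have hd : (0:ℝ) < (1+s)*(1-s) := by nlinarith
      positivity
  have h0' : f 0 ≤ f t := mono (by constructor <;> norm_num) ⟨h0, h1⟩ h0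
  have hf0 : f 0 = 0 := by simp [hf]
  have hlog : Real.log ((1+t)/(1-t)) = Real.log (1+t) - Real.log (1-t) :=
    Real.log_div (by nlinarith) (by nlinarith)
  rw [hlog]
  simp only [hf] at h0' hf0
  linarith

lemma log_ub (t : ℝ) (h0 : 0 ≤ t) (h1 : t < 1) :
    Real.log ((1+t)/(1-t)) ≤ 2*t + 2*t^3/(3*(1-t^2)) := by
  set f : ℝ → ℝ := fun s => 2*s + 2*s^3/(3*(1-s^2)) - (Real.log (1+s) - Real.log (1-s)) with hf
  have key : ∀ s ∈ Set.Ioo (0:ℝ) 1, HasDerivAt f (4*s^4/(3*(1-s^2)^2)) s := by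
    intro s hs
    obtain ⟨hs0, hs1⟩ := hs
    have h1s : (1:ℝ) + s ≠ 0 := by nlinarith
    have h2s : (1:ℝ) - s ≠ 0 := by nlinarith
    have h3s : (3:ℝ)*(1-s^2) ≠ 0 := by nlinarith
    have d1 : HasDerivAt (fun u : ℝ => Real.log (1+u)) (1/(1+s)) s := by
      have := (Real.hasDerivAt_log h1s).comp s ((hasDerivAt_id s).const_add 1)
      simpa [Function.comp_def] using this
    have d2 : HasDerivAt (fun u : ℝ => Real.log (1-u)) (-(1/(1-s))) s := by
      have := (Real.hasDerivAt_log h2s).comp s ((hasDerivAt_id s).neg.const_add 1)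
      simpa [Function.comp_def] using this
    have d3 : HasDerivAt (fun u : ℝ => 2*u) (2:ℝ) s := by
      simpa using (hasDerivAt_id s).const_mul 2
    have dn : HasDerivAt (fun u : ℝ => 2*u^3) (6*s^2) s := by
      have := (hasDerivAt_pow 3 s).const_mul 2
      refine this.congr_deriv ?_; push_cast; ring
    have dd : HasDerivAt (fun u : ℝ => 3*(1-u^2)) (-(6*s)) s := by
      have := ((hasDerivAt_pow 2 s).neg.const_add 1).const_mul 3
      refine this.congr_deriv ?_; push_cast; ring
    have d4 : HasDerivAt (fun u : ℝ => 2*u^3/(3*(1-u^2)))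
        ((6*s^2*(3*(1-s^2)) - 2*s^3*(-(6*s)))/(3*(1-s^2))^2) s := dn.div dd h3s
    have := (d3.add d4).sub (d1.sub d2)
    refine this.congr_deriv ?_
    have h5 : (0:ℝ) < 1 - s^2 := by nlinarith
    have hD : (3:ℝ) - s^2*6 + s^4*3 ≠ 0 := by nlinarith [mul_pos h5 h5]
    field_simp
    ring_nf
  have cont : ContinuousOn f (Set.Ico 0 1) := by
    intro s hs
    obtain ⟨hs0, hs1⟩ := hs
    have h1s : (1:ℝ) + s ≠ 0 := by nlinarith
    have h2s : (1:ℝ) - s ≠ 0 := by nlinarith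
    have h3s : (3:ℝ)*(1-s^2) ≠ 0 := by nlinarith
    apply ContinuousAt.continuousWithinAt
    have c1 : ContinuousAt (fun u : ℝ => Real.log (1+u)) s :=
      (Real.continuousAt_log h1s).comp (by fun_prop)
    have c2 : ContinuousAt (fun u : ℝ => Real.log (1-u)) s :=
      (Real.continuousAt_log h2s).comp (by fun_prop)
    have c3 : ContinuousAt (fun u : ℝ => 2*u^3/(3*(1-u^2))) s :=
      ContinuousAt.div (by fun_prop) (by fun_prop) h3s
    exact (ContinuousAt.add (by fun_prop) c3).sub (c1.sub c2)
  have mono : MonotoneOn f (Set.Ico 0 1) := by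
    apply monotoneOn_of_deriv_nonneg (convex_Ico 0 1) cont
    · intro s hs
      rw [interior_Ico] at hs
      exact (key s hs).differentiableAt.differentiableWithinAt
    · intro s hs
      rw [interior_Ico] at hs
      rw [(key s hs).deriv]
      obtain ⟨hs0, hs1⟩ := hs
      have : (1:ℝ) - s^2 > 0 := by nlinarith
      positivity
  have h0' : f 0 ≤ f t := mono (by constructor <;> norm_num) ⟨h0, h1⟩ h0
  have hf0 : f 0 = 0 := by simp [hf]
  have hlog : Real.log ((1+t)/(1-t)) = Real.log (1+t) - Real.log (1-t) :=
    Real.log_div (by nlinarith) (by nlinarith)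
  rw [hlog]
  simp only [hf] at h0' hf0
  linarith

/-- Limits as `c → 0⁺` of the unique zero `ξ(c)` of
`F_c(x) = 2x + θc − η log((η+x)/(η−x))` in `(0, η)`:
`ξ(c) → 0`, `c/ξ(c) → 0` and `c·ξ′(c) → 0`. -/
theorem stmt_3 (η θ : ℝ) (hη : 0 < η) (hθ : 0 < θ) (ξ : ℝ → ℝ)
    (hξ : ∀ c : ℝ, 0 < c → ξ c ∈ Set.Ioo 0 η ∧
      2 * ξ c + θ * c - η * Real.log ((η + ξ c) / (η - ξ c)) = 0) :
    Filter.Tendsto ξ (nhdsWithin 0 (Set.Ioi 0)) (nhds 0) ∧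
    Filter.Tendsto (fun c => c / ξ c) (nhdsWithin 0 (Set.Ioi 0)) (nhds 0) ∧
    Filter.Tendsto (fun c => c * ((θ / 2) * (η ^ 2 - (ξ c) ^ 2) / (ξ c) ^ 2))
      (nhdsWithin 0 (Set.Ioi 0)) (nhds 0) := by
  have key : ∀ c : ℝ, 0 < c →
      2*(ξ c)^3/(3*η^2) ≤ θ*c ∧ θ*c ≤ 2*(ξ c)^3/(3*(η^2 - (ξ c)^2)) := by
    intro c hc
    obtain ⟨⟨hx0, hxη⟩, heq⟩ := hξ c hc
    set x := ξ c with hxdef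
    have hηx : (0:ℝ) < η^2 - x^2 := by nlinarith
    have ht0 : 0 ≤ x/η := by positivity
    have ht1 : x/η < 1 := (div_lt_one hη).2 hxη
    have hrw : (1 + x/η)/(1 - x/η) = (η+x)/(η-x) := by
      rw [div_eq_div_iff (by nlinarith) (by nlinarith)]
      field_simp
    have hLb := log_lb (x/η) ht0 ht1
    have hUb := log_ub (x/η) ht0 ht1
    rw [hrw] at hLb hUb
    have hθc : θ*c = η * Real.log ((η+x)/(η-x)) - 2*x := by linarith
    constructor
    · have h1 := mul_le_mul_of_nonneg_left hLb hη.le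
      have hid : η * (2*(x/η) + 2*(x/η)^3/3) = 2*x + 2*x^3/(3*η^2) := by
        field_simp
      rw [hid] at h1
      linarith
    · have h1 := mul_le_mul_of_nonneg_left hUb hη.le
      have hid : η * (2*(x/η) + 2*(x/η)^3/(3*(1-(x/η)^2))) =
          2*x + 2*x^3/(3*(η^2 - x^2)) := by
        have : (1:ℝ) - (x/η)^2 = (η^2 - x^2)/η^2 := by field_simp
        rw [this]
        field_simp
      rw [hid] at h1
      linarith
  have hpos : ∀ᶠ c in nhdsWithin (0:ℝ) (Set.Ioi 0), 0 < c ∧ 0 < ξ c ∧ ξ c < η := by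
    filter_upwards [self_mem_nhdsWithin] with c hc
    exact ⟨hc, (hξ c hc).1.1, (hξ c hc).1.2⟩
  have hlim1 : Filter.Tendsto ξ (nhdsWithin 0 (Set.Ioi 0)) (nhds 0) := by
    apply squeeze_zero' (g := fun c => ((3*θ*η^2/2)*c) ^ ((1:ℝ)/3))
    · filter_upwards [hpos] with c hc
      exact hc.2.1.le
    · filter_upwards [hpos] with c hc
      obtain ⟨hc, hx0, hxη⟩ := hc
      have h1 := (key c hc).1
      rw [div_le_iff₀ (by positivity)] at h1
      have hx3 : (ξ c)^3 ≤ (3*θ*η^2/2)*c := by nlinarith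
      calc ξ c = ((ξ c)^3) ^ ((1:ℝ)/3) := by
            rw [← Real.rpow_natCast (ξ c) 3, ← Real.rpow_mul hx0.le]
            norm_num
        _ ≤ ((3*θ*η^2/2)*c) ^ ((1:ℝ)/3) :=
            Real.rpow_le_rpow (by positivity) hx3 (by norm_num)
    · have h1 : Filter.Tendsto (fun c : ℝ => (3*θ*η^2/2)*c)
          (nhdsWithin 0 (Set.Ioi 0)) (nhds 0) := by
        apply tendsto_nhdsWithin_of_tendsto_nhds
        exact (continuous_const.mul continuous_id).tendsto' 0 0 (by simp)
      have h2 : ContinuousAt (fun y : ℝ => y ^ ((1:ℝ)/3)) 0 :=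
        Real.continuousAt_rpow_const 0 (1/3) (Or.inr (by norm_num))
      have := h2.tendsto.comp h1
      simpa [Function.comp_def, Real.zero_rpow (by norm_num : (1:ℝ)/3 ≠ 0)] using this
  refine ⟨hlim1, ?_, ?_⟩
  · have hev : ∀ᶠ c in nhdsWithin (0:ℝ) (Set.Ioi 0), ξ c < η/2 :=
      hlim1.eventually_lt_const (by positivity)
    apply squeeze_zero' (g := fun c => 8*(ξ c)^2/(9*θ*η^2))
    · filter_upwards [hpos] with c hc
      exact div_nonneg hc.1.le hc.2.1.le
    · filter_upwards [hpos, hev] with c hc hsm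
      obtain ⟨hc, hx0, hxη⟩ := hc
      have hηx : (0:ℝ) < η^2 - (ξ c)^2 := by nlinarith
      have h1 := (key c hc).2
      rw [le_div_iff₀ (by positivity)] at h1
      rw [div_le_div_iff₀ hx0 (by positivity)]
      have h2 : (3:ℝ)*η^2/4 ≤ η^2 - (ξ c)^2 := by nlinarith
      have h3 : θ*c*(3*(3*η^2/4)) ≤ θ*c*(3*(η^2-(ξ c)^2)) :=
        mul_le_mul_of_nonneg_left (by linarith) (by positivity)
      nlinarith
    · have : Filter.Tendsto (fun x : ℝ => 8*x^2/(9*θ*η^2)) (nhds 0) (nhds 0) := by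
        have : Continuous (fun x : ℝ => 8*x^2/(9*θ*η^2)) := by fun_prop
        exact this.tendsto' 0 0 (by norm_num)
      exact this.comp hlim1
  · apply squeeze_zero' (g := fun c => ξ c / 3)
    · filter_upwards [hpos] with c hc
      obtain ⟨hc, hx0, hxη⟩ := hc
      have hηx : (0:ℝ) < η^2 - (ξ c)^2 := by nlinarith
      positivity
    · filter_upwards [hpos] with c hc
      obtain ⟨hc, hx0, hxη⟩ := hc
      have hηx : (0:ℝ) < η^2 - (ξ c)^2 := by nlinarith
      have h1 := (key c hc).2
      rw [le_div_iff₀ (by positivity)] at h1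
      rw [show c * ((θ / 2) * (η ^ 2 - (ξ c) ^ 2) / (ξ c) ^ 2)
          = (c * (θ/2) * (η^2 - (ξ c)^2)) / (ξ c)^2 by ring,
        div_le_div_iff₀ (by positivity) (by norm_num : (0:ℝ) < 3)]
      nlinarith
    · simpa using hlim1.div_const 3
end

section
/- As c → +∞ one has: ξ(c) → η and c·(η − ξ(c)) → 0. -/
open Real Filter Set

/-- Limits as `c → +∞` of the unique zero `ξ(c)` of
`F_c(x) = 2x + θc − η log((η+x)/(η−x))` in `(0, η)`:
`ξ(c) → η` and `c·(η − ξ(c)) → 0`. -/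
theorem stmt_4 (η θ : ℝ) (hη : 0 < η) (hθ : 0 < θ) (ξ : ℝ → ℝ)
    (hξ : ∀ c : ℝ, 0 < c → ξ c ∈ Set.Ioo 0 η ∧
      2 * ξ c + θ * c - η * Real.log ((η + ξ c) / (η - ξ c)) = 0) :
    Filter.Tendsto ξ Filter.atTop (nhds η) ∧
    Filter.Tendsto (fun c => c * (η - ξ c)) Filter.atTop (nhds 0) := by
  have key : ∀ c : ℝ, 0 < c →
      0 < η - ξ c ∧ η - ξ c ≤ 2 * η * Real.exp (-(θ * c / η)) := by
    intro c hc
    obtain ⟨⟨h0, h1⟩, heq⟩ := hξ c hc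
    have hpos : 0 < η - ξ c := by linarith
    have hpos' : 0 < η + ξ c := by linarith
    have hne : η ≠ 0 := ne_of_gt hη
    have hlog : Real.log ((η + ξ c) / (η - ξ c)) = (2 * ξ c + θ * c) / η := by
      field_simp
      linarith
    have hratio : (η + ξ c) / (η - ξ c) = Real.exp ((2 * ξ c + θ * c) / η) := by
      rw [← hlog, Real.exp_log (by positivity)]
    have hrw : η - ξ c = (η + ξ c) * Real.exp (-((2 * ξ c + θ * c) / η)) := by
      rw [Real.exp_neg, ← hratio]
      field_simp
    refine ⟨hpos, ?_⟩
    rw [hrw]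
    have e1 : Real.exp (-((2 * ξ c + θ * c) / η)) ≤ Real.exp (-(θ * c / η)) := by
      apply Real.exp_le_exp.mpr
      have : θ * c / η ≤ (2 * ξ c + θ * c) / η := by
        gcongr
        linarith
      linarith
    exact mul_le_mul (by linarith) e1 (le_of_lt (Real.exp_pos _)) (by linarith)
  have hexp0 : Filter.Tendsto (fun c : ℝ => Real.exp (-(θ * c / η))) Filter.atTop (nhds 0) := by
    apply Real.tendsto_exp_atBot.comp
    apply tendsto_neg_atBot_iff.mpr
    apply Filter.Tendsto.atTop_div_const hη
    exact Filter.Tendsto.const_mul_atTop hθ tendsto_id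
  constructor
  · have hlb : ∀ᶠ c in Filter.atTop, η - 2 * η * Real.exp (-(θ * c / η)) ≤ ξ c := by
      filter_upwards [Filter.eventually_gt_atTop 0] with c hc
      linarith [(key c hc).2]
    have hub : ∀ᶠ c in Filter.atTop, ξ c ≤ η := by
      filter_upwards [Filter.eventually_gt_atTop 0] with c hc
      linarith [(key c hc).1]
    have hL : Filter.Tendsto (fun c : ℝ => η - 2 * η * Real.exp (-(θ * c / η)))
        Filter.atTop (nhds η) := by
      have := (tendsto_const_nhds (x := η) (f := Filter.atTop (α := ℝ))).sub
        ((hexp0.const_mul (2 * η)))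
      simpa using this
    exact tendsto_of_tendsto_of_tendsto_of_le_of_le' hL tendsto_const_nhds hlb hub
  · have hlb : ∀ᶠ c in Filter.atTop, 0 ≤ c * (η - ξ c) := by
      filter_upwards [Filter.eventually_gt_atTop 0] with c hc
      exact le_of_lt (mul_pos hc (key c hc).1)
    have hub : ∀ᶠ c in Filter.atTop, c * (η - ξ c) ≤ 2 * η * (c * Real.exp (-(θ * c / η))) := by
      filter_upwards [Filter.eventually_gt_atTop 0] with c hc
      have := (key c hc).2
      nlinarith [Real.exp_pos (-(θ * c / η))]
    have hU : Filter.Tendsto (fun c : ℝ => 2 * η * (c * Real.exp (-(θ * c / η))))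
        Filter.atTop (nhds 0) := by
      have hmain : Filter.Tendsto (fun c : ℝ => c * Real.exp (-(θ * c / η)))
          Filter.atTop (nhds 0) := by
        have h1 : Filter.Tendsto (fun y : ℝ => (η / θ) * (y ^ 1 * Real.exp (-y)))
            Filter.atTop (nhds 0) := by
          simpa using (Real.tendsto_pow_mul_exp_neg_atTop_nhds_zero 1).const_mul (η / θ)
        have h2 : Filter.Tendsto (fun c : ℝ => θ * c / η) Filter.atTop Filter.atTop := by
          apply Filter.Tendsto.atTop_div_const hη
          exact Filter.Tendsto.const_mul_atTop hθ tendsto_id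
        have := h1.comp h2
        convert this using 2 with c
        simp only [Function.comp_apply]
        field_simp
      simpa using hmain.const_mul (2 * η)
    exact tendsto_of_tendsto_of_tendsto_of_le_of_le' tendsto_const_nhds hU hlb hub
end

section
/- Suppose the 8-tuple (A₁₁, A₁₂, A₂₁, A₂₂, x̄₁, x̄₂, x₁*, x₂*) satisfies the symmetry relations x̄₁ = 2s̃ − x̄₂, x₁* = 2s̃ − x₂*, A₁₁ = A₂₂·e^{−2θs̃}, A₁₂ = A₂₁·e^{2θs̃}. Then φ₁(x) = φ₂(2s̃ − x) for every x ∈ ℝ, and the player-1 equations (φ₁′(x₁*) = λ, φ₁″(x₁*) ≤ 0, φ₁′(x̄₁) = λ, φ₁(x̄₁) = φ₁(x₁*) − c − λ(x₁* − x̄₁), φ₁(x̄₂) = φ₁(x₂*) + c̃ + λ̃(x̄₂ − x₂*)) hold if and only if the player-2 equations (φ₂′(x₂*) = −λ, φ₂″(x₂*) ≤ 0, φ₂′(x̄₂) = −λ, φ₂(x̄₁) = φ₂(x₁*) + c̃ + λ̃(x₁* − x̄₁), φ₂(x̄₂) = φ₂(x₂*) − c − λ(x̄₂ − x₂*)) hold.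 -/
open Real Filter Set

/-- `φ₁(x) = A₁₁ e^{θx} + A₁₂ e^{−θx} + (x − s₁)/ρ`. -/
noncomputable def phi1 (ρ θ s1 A11 A12 : ℝ) : ℝ → ℝ :=
  fun x => A11 * Real.exp (θ * x) + A12 * Real.exp (-(θ * x)) + (x - s1) / ρ

/-- `φ₂(x) = A₂₁ e^{θx} + A₂₂ e^{−θx} + (s₂ − x)/ρ`. -/
noncomputable def phi2 (ρ θ s2 A21 A22 : ℝ) : ℝ → ℝ :=
  fun x => A21 * Real.exp (θ * x) + A22 * Real.exp (-(θ * x)) + (s2 - x) / ρ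

lemma dphi1 (ρ θ s1 A11 A12 : ℝ) :
    deriv (phi1 ρ θ s1 A11 A12)
      = fun x => A11 * θ * Real.exp (θ * x) - A12 * θ * Real.exp (-(θ * x)) + 1 / ρ := by
  funext x
  have h1 : HasDerivAt (fun x : ℝ => θ * x) θ x := by
    simpa using (hasDerivAt_id x).const_mul θ
  have h4 : HasDerivAt (fun x : ℝ => (x - s1) / ρ) (1 / ρ) x := by
    simpa using ((hasDerivAt_id x).sub_const s1).div_const ρ
  have h : HasDerivAt (phi1 ρ θ s1 A11 A12)
      (A11 * θ * Real.exp (θ * x) - A12 * θ * Real.exp (-(θ * x)) + 1 / ρ) x := by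
    have := ((h1.exp.const_mul A11).add (h1.neg.exp.const_mul A12)).add h4
    refine this.congr_deriv ?_
    simp only [Pi.neg_apply]
    ring
  exact h.deriv

lemma dphi2 (ρ θ s2 A21 A22 : ℝ) :
    deriv (phi2 ρ θ s2 A21 A22)
      = fun x => A21 * θ * Real.exp (θ * x) - A22 * θ * Real.exp (-(θ * x)) + -1 / ρ := by
  funext x
  have h1 : HasDerivAt (fun x : ℝ => θ * x) θ x := by
    simpa using (hasDerivAt_id x).const_mul θ
  have h4 : HasDerivAt (fun x : ℝ => (s2 - x) / ρ) (-1 / ρ) x := by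
    simpa using ((hasDerivAt_id x).const_sub s2).div_const ρ
  have h : HasDerivAt (phi2 ρ θ s2 A21 A22)
      (A21 * θ * Real.exp (θ * x) - A22 * θ * Real.exp (-(θ * x)) + -1 / ρ) x := by
    have := ((h1.exp.const_mul A21).add (h1.neg.exp.const_mul A22)).add h4
    refine this.congr_deriv ?_
    simp only [Pi.neg_apply]
    ring
  exact h.deriv

lemma d2lin (B C D θ : ℝ) :
    deriv (fun x => B * Real.exp (θ * x) - C * Real.exp (-(θ * x)) + D)
      = fun x => B * θ * Real.exp (θ * x) + C * θ * Real.exp (-(θ * x)) := by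
  funext x
  have h1 : HasDerivAt (fun x : ℝ => θ * x) θ x := by
    simpa using (hasDerivAt_id x).const_mul θ
  have h : HasDerivAt (fun x => B * Real.exp (θ * x) - C * Real.exp (-(θ * x)) + D)
      (B * θ * Real.exp (θ * x) + C * θ * Real.exp (-(θ * x))) x := by
    have := (((h1.exp.const_mul B).sub (h1.neg.exp.const_mul C)).add_const D)
    refine this.congr_deriv ?_
    simp only [Pi.neg_apply]
    ring
  exact h.deriv

/-- Under the symmetry relations, `φ₁(x) = φ₂(2s̃ − x)` and the player-1
equations hold iff the player-2 equations hold. -/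
theorem stmt_7 (ρ σ lam lamt c ct s1 s2 : ℝ) (hρ : 0 < ρ) (hσ : 0 < σ)
    (h1 : 0 < 1 - lam * ρ) (h2 : lamt ≤ lam) (h3 : 0 ≤ lamt)
    (h4 : ct ≤ c) (h5 : 0 ≤ ct) (h6 : 0 < c)
    (h7 : (c, lam) ≠ (ct, lamt)) (h8 : s1 < s2)
    (θ st : ℝ) (hθ : θ = Real.sqrt (2 * ρ / σ ^ 2)) (hst : st = (s1 + s2) / 2)
    (A11 A12 A21 A22 xb1 xb2 xs1 xs2 : ℝ)
    (hsym1 : xb1 = 2 * st - xb2) (hsym2 : xs1 = 2 * st - xs2)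
    (hsym3 : A11 = A22 * Real.exp (-(2 * θ * st)))
    (hsym4 : A12 = A21 * Real.exp (2 * θ * st)) :
    (∀ x : ℝ, phi1 ρ θ s1 A11 A12 x = phi2 ρ θ s2 A21 A22 (2 * st - x)) ∧
    ((deriv (phi1 ρ θ s1 A11 A12) xs1 = lam ∧
      deriv (deriv (phi1 ρ θ s1 A11 A12)) xs1 ≤ 0 ∧
      deriv (phi1 ρ θ s1 A11 A12) xb1 = lam ∧
      phi1 ρ θ s1 A11 A12 xb1
        = phi1 ρ θ s1 A11 A12 xs1 - c - lam * (xs1 - xb1) ∧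
      phi1 ρ θ s1 A11 A12 xb2
        = phi1 ρ θ s1 A11 A12 xs2 + ct + lamt * (xb2 - xs2))
      ↔
     (deriv (phi2 ρ θ s2 A21 A22) xs2 = -lam ∧
      deriv (deriv (phi2 ρ θ s2 A21 A22)) xs2 ≤ 0 ∧
      deriv (phi2 ρ θ s2 A21 A22) xb2 = -lam ∧
      phi2 ρ θ s2 A21 A22 xb1
        = phi2 ρ θ s2 A21 A22 xs1 + ct + lamt * (xs1 - xb1) ∧
      phi2 ρ θ s2 A21 A22 xb2
        = phi2 ρ θ s2 A21 A22 xs2 - c - lam * (xb2 - xs2))) := by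
  have hexp : ∀ x : ℝ, Real.exp (θ * (2 * st - x)) = Real.exp (2 * θ * st) * Real.exp (-(θ * x))
      ∧ Real.exp (-(θ * (2 * st - x))) = Real.exp (-(2 * θ * st)) * Real.exp (θ * x) := by
    intro x
    constructor <;> rw [← Real.exp_add] <;> ring_nf
  have key : ∀ x : ℝ, phi1 ρ θ s1 A11 A12 x = phi2 ρ θ s2 A21 A22 (2 * st - x) := by
    intro x
    simp only [phi1, phi2, hsym3, hsym4, (hexp x).1, (hexp x).2]
    rw [show s2 - (2 * st - x) = x - s1 by rw [hst]; ring]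
    ring
  have kd : ∀ x : ℝ, deriv (phi1 ρ θ s1 A11 A12) x
      = -(deriv (phi2 ρ θ s2 A21 A22) (2 * st - x)) := by
    intro x
    rw [dphi1, dphi2]
    simp only [hsym3, hsym4, (hexp x).1, (hexp x).2]
    ring
  have kdd : ∀ x : ℝ, deriv (deriv (phi1 ρ θ s1 A11 A12)) x
      = deriv (deriv (phi2 ρ θ s2 A21 A22)) (2 * st - x) := by
    intro x
    rw [dphi1, dphi2, d2lin, d2lin]
    simp only [hsym3, hsym4, (hexp x).1, (hexp x).2]
    ring
  have e1 : 2 * st - xs1 = xs2 := by rw [hsym2]; ring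
  have e2 : 2 * st - xb1 = xb2 := by rw [hsym1]; ring
  have e3 : 2 * st - xs2 = xs1 := by rw [hsym2]
  have e4 : 2 * st - xb2 = xb1 := by rw [hsym1]
  have edif : xb2 - xs2 = xs1 - xb1 := by rw [hsym1, hsym2]; ring
  have m1 : lamt * (xb2 - xs2) = lamt * (xs1 - xb1) := by rw [edif]
  have m2 : lam * (xs1 - xb1) = lam * (xb2 - xs2) := by rw [edif]
  refine ⟨key, ?_⟩
  have v1 := key xb1; rw [e2] at v1
  have v2 := key xs1; rw [e1] at v2
  have v3 := key xb2; rw [e4] at v3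
  have v4 := key xs2; rw [e3] at v4
  have d1 := kd xs1; rw [e1] at d1
  have d2 := kd xb1; rw [e2] at d2
  have d3 := kd xs2; rw [e3] at d3
  have d4 := kd xb2; rw [e4] at d4
  have dd1 := kdd xs1; rw [e1] at dd1
  have dd2 := kdd xs2; rw [e3] at dd2
  constructor
  · rintro ⟨p1, p2, p3, p4, p5⟩
    exact ⟨by linarith, by linarith, by linarith, by linarith, by linarith⟩
  · rintro ⟨p1, p2, p3, p4, p5⟩
    exact ⟨by linarith, by linarith, by linarith, by linarith, by linarith⟩
end

section
/- Suppose the 8-tuple (A₁₁, A₁₂, A₂₁, A₂₂, x̄₁, x̄₂, x₁*, x₂*) satisfies the system (S) and additionally A₂₁ > 0 and A₂₂ < 0. Then there exists x̃ ∈ (x₂*, x̄₂) such that φ₂″(x) < 0 for all x ∈ (x̄₁, x̃) and φ₂″(x) > 0 for all x ∈ (x̃, x̄₂). -/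
open Real Filter Set

/-- The system (S): order conditions together with the ten equations, where
`θ = √(2ρ/σ²)`. -/
def SystemS (ρ σ lam lamt c ct s1 s2 A11 A12 A21 A22 xb1 xb2 xs1 xs2 : ℝ) : Prop :=
  xb1 < xs1 ∧ xs1 < xb2 ∧ xb1 < xs2 ∧ xs2 < xb2 ∧
  deriv (phi1 ρ (Real.sqrt (2 * ρ / σ ^ 2)) s1 A11 A12) xs1 = lam ∧
  deriv (deriv (phi1 ρ (Real.sqrt (2 * ρ / σ ^ 2)) s1 A11 A12)) xs1 ≤ 0 ∧
  deriv (phi1 ρ (Real.sqrt (2 * ρ / σ ^ 2)) s1 A11 A12) xb1 = lam ∧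
  phi1 ρ (Real.sqrt (2 * ρ / σ ^ 2)) s1 A11 A12 xb1
    = phi1 ρ (Real.sqrt (2 * ρ / σ ^ 2)) s1 A11 A12 xs1 - c - lam * (xs1 - xb1) ∧
  phi1 ρ (Real.sqrt (2 * ρ / σ ^ 2)) s1 A11 A12 xb2
    = phi1 ρ (Real.sqrt (2 * ρ / σ ^ 2)) s1 A11 A12 xs2 + ct + lamt * (xb2 - xs2) ∧
  deriv (phi2 ρ (Real.sqrt (2 * ρ / σ ^ 2)) s2 A21 A22) xs2 = -lam ∧
  deriv (deriv (phi2 ρ (Real.sqrt (2 * ρ / σ ^ 2)) s2 A21 A22)) xs2 ≤ 0 ∧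
  deriv (phi2 ρ (Real.sqrt (2 * ρ / σ ^ 2)) s2 A21 A22) xb2 = -lam ∧
  phi2 ρ (Real.sqrt (2 * ρ / σ ^ 2)) s2 A21 A22 xb1
    = phi2 ρ (Real.sqrt (2 * ρ / σ ^ 2)) s2 A21 A22 xs1 + ct + lamt * (xs1 - xb1) ∧
  phi2 ρ (Real.sqrt (2 * ρ / σ ^ 2)) s2 A21 A22 xb2
    = phi2 ρ (Real.sqrt (2 * ρ / σ ^ 2)) s2 A21 A22 xs2 - c - lam * (xb2 - xs2)

/-- If the 8-tuple solves (S) and `A₂₁ > 0 > A₂₂`, then `φ₂″` changes sign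
exactly once in `(x̄₁, x̄₂)`, at some `x̃ ∈ (x₂*, x̄₂)`. -/
theorem stmt_8 (ρ σ lam lamt c ct s1 s2 : ℝ) (hρ : 0 < ρ) (hσ : 0 < σ)
    (h1 : 0 < 1 - lam * ρ) (h2 : lamt ≤ lam) (h3 : 0 ≤ lamt)
    (h4 : ct ≤ c) (h5 : 0 ≤ ct) (h6 : 0 < c)
    (h7 : (c, lam) ≠ (ct, lamt)) (h8 : s1 < s2)
    (A11 A12 A21 A22 xb1 xb2 xs1 xs2 : ℝ)
    (hS : SystemS ρ σ lam lamt c ct s1 s2 A11 A12 A21 A22 xb1 xb2 xs1 xs2)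
    (hA21 : 0 < A21) (hA22 : A22 < 0) :
    ∃ xt ∈ Set.Ioo xs2 xb2,
      (∀ x ∈ Set.Ioo xb1 xt,
        deriv (deriv (phi2 ρ (Real.sqrt (2 * ρ / σ ^ 2)) s2 A21 A22)) x < 0) ∧
      (∀ x ∈ Set.Ioo xt xb2,
        0 < deriv (deriv (phi2 ρ (Real.sqrt (2 * ρ / σ ^ 2)) s2 A21 A22)) x) := by
  obtain ⟨h01, h02, h03, h04, _, _, _, _, _, hd2s, _, hd2b, _, _⟩ := hS
  set θ := Real.sqrt (2 * ρ / σ ^ 2) with hθdef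
  have hθ : 0 < θ := Real.sqrt_pos.2 (by positivity)
  have hθ2 : (0:ℝ) < θ ^ 2 := by positivity
  have hexp : ∀ x : ℝ, HasDerivAt (fun y => Real.exp (θ * y)) (Real.exp (θ * x) * θ) x := by
    intro x
    have h := (Real.hasDerivAt_exp (θ * x)).comp x ((hasDerivAt_id x).const_mul θ)
    simpa [Function.comp_def] using h
  have hexpn : ∀ x : ℝ, HasDerivAt (fun y => Real.exp (-(θ * y)))
      (Real.exp (-(θ * x)) * (-θ)) x := by
    intro x
    have h := (Real.hasDerivAt_exp (-(θ * x))).comp x (((hasDerivAt_id x).const_mul θ).neg)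
    simpa [Function.comp_def] using h
  have hder1 : ∀ x, HasDerivAt (phi2 ρ θ s2 A21 A22)
      (θ * (A21 * Real.exp (θ * x) - A22 * Real.exp (-(θ * x))) - 1 / ρ) x := by
    intro x
    have h := (((hexp x).const_mul A21).add ((hexpn x).const_mul A22)).add
      (((hasDerivAt_const x s2).sub (hasDerivAt_id x)).div_const ρ)
    have heq : phi2 ρ θ s2 A21 A22
        = fun y => A21 * Real.exp (θ * y) + A22 * Real.exp (-(θ * y)) + (s2 - id y) / ρ := rfl
    rw [heq]
    exact h.congr_deriv (by ring)
  have hD1 : deriv (phi2 ρ θ s2 A21 A22)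
      = fun x => θ * (A21 * Real.exp (θ * x) - A22 * Real.exp (-(θ * x))) - 1 / ρ :=
    funext fun x => (hder1 x).deriv
  have hder2 : ∀ x, HasDerivAt
      (fun x => θ * (A21 * Real.exp (θ * x) - A22 * Real.exp (-(θ * x))) - 1 / ρ)
      (θ ^ 2 * (A21 * Real.exp (θ * x) + A22 * Real.exp (-(θ * x)))) x := by
    intro x
    have h := ((((hexp x).const_mul A21).sub
      ((hexpn x).const_mul A22)).const_mul θ).sub_const (1 / ρ)
    exact h.congr_deriv (by ring)
  have hD2 : deriv (deriv (phi2 ρ θ s2 A21 A22))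
      = fun x => θ ^ 2 * (A21 * Real.exp (θ * x) + A22 * Real.exp (-(θ * x))) := by
    rw [hD1]; exact funext fun x => (hder2 x).deriv
  have hcont : ContinuousOn
      (fun x => θ * (A21 * Real.exp (θ * x) - A22 * Real.exp (-(θ * x))) - 1 / ρ)
      (Set.Icc xs2 xb2) := by
    apply Continuous.continuousOn; fun_prop
  have heq2 : (fun x => θ * (A21 * Real.exp (θ * x) - A22 * Real.exp (-(θ * x))) - 1 / ρ) xs2
      = (fun x => θ * (A21 * Real.exp (θ * x) - A22 * Real.exp (-(θ * x))) - 1 / ρ) xb2 := by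
    have e1 := hd2s; have e2 := hd2b
    rw [hD1] at e1 e2
    simp only at e1 e2 ⊢
    rw [e1, e2]
  obtain ⟨xt, hxt, hxt0⟩ := exists_hasDerivAt_eq_zero h04 hcont heq2 (fun x _ => hder2 x)
  have hgxt : A21 * Real.exp (θ * xt) + A22 * Real.exp (-(θ * xt)) = 0 := by
    rcases mul_eq_zero.1 hxt0 with h | h
    · exact absurd h (by positivity)
    · exact h
  refine ⟨xt, hxt, ?_, ?_⟩
  · intro x hx
    rw [hD2]
    have hxlt : x < xt := hx.2
    have e1 : Real.exp (θ * x) < Real.exp (θ * xt) :=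
      Real.exp_lt_exp.2 (mul_lt_mul_of_pos_left hxlt hθ)
    have e2 : Real.exp (-(θ * xt)) < Real.exp (-(θ * x)) :=
      Real.exp_lt_exp.2 (neg_lt_neg (mul_lt_mul_of_pos_left hxlt hθ))
    have t1 : A21 * Real.exp (θ * x) < A21 * Real.exp (θ * xt) :=
      mul_lt_mul_of_pos_left e1 hA21
    have t2 : A22 * Real.exp (-(θ * x)) < A22 * Real.exp (-(θ * xt)) :=
      mul_lt_mul_of_neg_left e2 hA22
    exact mul_neg_of_pos_of_neg hθ2 (by linarith)
  · intro x hx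
    rw [hD2]
    have hxlt : xt < x := hx.1
    have e1 : Real.exp (θ * xt) < Real.exp (θ * x) :=
      Real.exp_lt_exp.2 (mul_lt_mul_of_pos_left hxlt hθ)
    have e2 : Real.exp (-(θ * x)) < Real.exp (-(θ * xt)) :=
      Real.exp_lt_exp.2 (neg_lt_neg (mul_lt_mul_of_pos_left hxlt hθ))
    have t1 : A21 * Real.exp (θ * xt) < A21 * Real.exp (θ * x) :=
      mul_lt_mul_of_pos_left e1 hA21
    have t2 : A22 * Real.exp (-(θ * xt)) < A22 * Real.exp (-(θ * x)) :=
      mul_lt_mul_of_neg_left e2 hA22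
    exact mul_pos hθ2 (by linarith)
end

section
/- Suppose the 8-tuple (A₁₁, A₁₂, A₂₁, A₂₂, x̄₁, x̄₂, x₁*, x₂*) satisfies the system (S) and additionally A₂₁ > 0 and A₂₂ < 0, and let Γ₂(y) = Ṽ₂(y) + λy. Then: (a) Γ₂(y) < Γ₂(x₂*) for every y ≠ x₂* (so x₂* is the unique global maximizer of Γ₂ on ℝ); (b) for every x ≤ x₂*, sup_{y ≤ x} Γ₂(y) = Γ₂(x). Consequently, for x ≥ x₂* the unique maximizer of y ↦ Ṽ₂(y) − c − λ(x − y) over y ≤ x is y = x₂*, while for x ≤ x₂* its supremum over y ≤ x equals Ṽ₂(x) − c. -/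
open Real Filter Set

set_option maxHeartbeats 4000000

/-- The candidate value function `Ṽ₂`, defined piecewise from `φ₂` with
`θ = √(2ρ/σ²)`. -/
noncomputable def V2t (ρ σ lam lamt c ct s2 A21 A22 xb1 xb2 xs1 xs2 : ℝ) : ℝ → ℝ :=
  fun x =>
    if x ≤ xb1 then
      phi2 ρ (Real.sqrt (2 * ρ / σ ^ 2)) s2 A21 A22 xs1 + ct + lamt * (xs1 - x)
    else if x < xb2 then
      phi2 ρ (Real.sqrt (2 * ρ / σ ^ 2)) s2 A21 A22 x
    else
      phi2 ρ (Real.sqrt (2 * ρ / σ ^ 2)) s2 A21 A22 xs2 - c - lam * (x - xs2)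

/-- `Γ₂(y) = Ṽ₂(y) + λy` has `x₂*` as unique global maximizer; for `x ≤ x₂*`
the running supremum of `Γ₂` over `(−∞, x]` is attained at `x`. Consequently,
for `x ≥ x₂*` the unique maximizer of `y ↦ Ṽ₂(y) − c − λ(x − y)` over `y ≤ x`
is `y = x₂*`, while for `x ≤ x₂*` its supremum over `y ≤ x` equals `Ṽ₂(x) − c`. -/
theorem stmt_9 (ρ σ lam lamt c ct s1 s2 : ℝ) (hρ : 0 < ρ) (hσ : 0 < σ)
    (h1 : 0 < 1 - lam * ρ) (h2 : lamt ≤ lam) (h3 : 0 ≤ lamt)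
    (h4 : ct ≤ c) (h5 : 0 ≤ ct) (h6 : 0 < c)
    (h7 : (c, lam) ≠ (ct, lamt)) (h8 : s1 < s2)
    (A11 A12 A21 A22 xb1 xb2 xs1 xs2 : ℝ)
    (hS : SystemS ρ σ lam lamt c ct s1 s2 A11 A12 A21 A22 xb1 xb2 xs1 xs2)
    (hA21 : 0 < A21) (hA22 : A22 < 0)
    (Γ₂ : ℝ → ℝ)
    (hΓ₂ : ∀ y : ℝ, Γ₂ y = V2t ρ σ lam lamt c ct s2 A21 A22 xb1 xb2 xs1 xs2 y
      + lam * y) :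
    (∀ y : ℝ, y ≠ xs2 → Γ₂ y < Γ₂ xs2) ∧
    (∀ x : ℝ, x ≤ xs2 → sSup (Γ₂ '' Set.Iic x) = Γ₂ x) ∧
    (∀ x : ℝ, xs2 ≤ x → ∀ y : ℝ, y ≤ x → y ≠ xs2 →
      V2t ρ σ lam lamt c ct s2 A21 A22 xb1 xb2 xs1 xs2 y - c - lam * (x - y)
        < V2t ρ σ lam lamt c ct s2 A21 A22 xb1 xb2 xs1 xs2 xs2 - c
          - lam * (x - xs2)) ∧
    (∀ x : ℝ, x ≤ xs2 →
      sSup ((fun y => V2t ρ σ lam lamt c ct s2 A21 A22 xb1 xb2 xs1 xs2 y - c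
        - lam * (x - y)) '' Set.Iic x)
        = V2t ρ σ lam lamt c ct s2 A21 A22 xb1 xb2 xs1 xs2 x - c) := by
  obtain ⟨ho1, ho2, ho3, ho4, e1, e2, e3, e4, e5, e6, e7, e8, e9, e10⟩ := hS
  set θ := Real.sqrt (2 * ρ / σ ^ 2) with hθdef
  have hθ : 0 < θ := Real.sqrt_pos.2 (by positivity)
  -- derivative of phi2
  have hphi2 : ∀ y : ℝ, HasDerivAt (phi2 ρ θ s2 A21 A22)
      (A21 * θ * Real.exp (θ * y) - A22 * θ * Real.exp (-(θ * y)) - 1 / ρ) y := by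
    intro y
    have hid : HasDerivAt (fun x : ℝ => θ * x) θ y := by
      simpa using (hasDerivAt_id y).const_mul θ
    have h2 : HasDerivAt (fun x : ℝ => A21 * Real.exp (θ * x))
        (A21 * (Real.exp (θ * y) * θ)) y := (hid.exp).const_mul A21
    have h3 : HasDerivAt (fun x : ℝ => A22 * Real.exp (-(θ * x)))
        (A22 * (Real.exp (-(θ * y)) * (-θ))) y := (hid.neg.exp).const_mul A22
    have h4 : HasDerivAt (fun x : ℝ => (s2 - x) / ρ) (-1 / ρ) y := by
      have : HasDerivAt (fun x : ℝ => s2 - x) (-1) y := by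
        simpa using (hasDerivAt_id y).const_sub s2
      simpa using this.div_const ρ
    have := (h2.add h3).add h4
    refine HasDerivAt.congr_deriv (f := phi2 ρ θ s2 A21 A22) this ?_
    ring
  set g : ℝ → ℝ := fun y => phi2 ρ θ s2 A21 A22 y + lam * y with hgdef
  have hgD : ∀ y : ℝ, HasDerivAt g
      (A21 * θ * Real.exp (θ * y) - A22 * θ * Real.exp (-(θ * y)) - 1 / ρ + lam) y := by
    intro y
    have hl : HasDerivAt (fun x : ℝ => lam * x) lam y := by
      simpa using (hasDerivAt_id y).const_mul lam
    exact (hphi2 y).add hl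
  set p := Real.exp (θ * xs2) with hpdef
  set q := Real.exp (θ * xb2) with hqdef
  have hp0 : 0 < p := Real.exp_pos _
  have hq0 : 0 < q := Real.exp_pos _
  have hpq : p < q := Real.exp_lt_exp.2 (mul_lt_mul_of_pos_left ho4 hθ)
  have hpinv : Real.exp (-(θ * xs2)) = p⁻¹ := by rw [Real.exp_neg, hpdef]
  have hqinv : Real.exp (-(θ * xb2)) = q⁻¹ := by rw [Real.exp_neg, hqdef]
  -- the two vanishing conditions
  have E1 : A21 * θ * p ^ 2 + (lam - 1 / ρ) * p - A22 * θ = 0 := by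
    have hd := (hphi2 xs2).deriv
    rw [e6] at hd
    rw [hpinv, ← hpdef] at hd
    have hinv : p⁻¹ * p = 1 := inv_mul_cancel₀ (ne_of_gt hp0)
    linear_combination (-p) * hd + A22 * θ * hinv
  have E2 : A21 * θ * q ^ 2 + (lam - 1 / ρ) * q - A22 * θ = 0 := by
    have hd := (hphi2 xb2).deriv
    rw [e8] at hd
    rw [hqinv, ← hqdef] at hd
    have hinv : q⁻¹ * q = 1 := inv_mul_cancel₀ (ne_of_gt hq0)
    linear_combination (-q) * hd + A22 * θ * hinv
  have hk : lam - 1 / ρ = -(A21 * θ) * (p + q) := by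
    have hne : p - q ≠ 0 := sub_ne_zero.2 (ne_of_lt hpq)
    have key : (p - q) * (A21 * θ * (p + q) + (lam - 1 / ρ)) = 0 := by
      linear_combination E1 - E2
    rcases mul_eq_zero.1 key with h | h
    · exact absurd h hne
    · linarith
  have hc : -(A22 * θ) = A21 * θ * (p * q) := by linear_combination E1 - p * hk
  -- sign of deriv of g
  have hsign : ∀ y : ℝ,
      (A21 * θ * Real.exp (θ * y) - A22 * θ * Real.exp (-(θ * y)) - 1 / ρ + lam)
        * Real.exp (θ * y)
      = A21 * θ * (Real.exp (θ * y) - p) * (Real.exp (θ * y) - q) := by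
    intro y
    have hmul : Real.exp (-(θ * y)) * Real.exp (θ * y) = 1 := by
      rw [← Real.exp_add]; simp
    linear_combination (-(A22 * θ)) * hmul + Real.exp (θ * y) * hk + hc
  have hdpos : ∀ y : ℝ, y < xs2 →
      0 < A21 * θ * Real.exp (θ * y) - A22 * θ * Real.exp (-(θ * y)) - 1 / ρ + lam := by
    intro y hy
    have hu0 : 0 < Real.exp (θ * y) := Real.exp_pos _
    have hup : Real.exp (θ * y) < p := Real.exp_lt_exp.2 (mul_lt_mul_of_pos_left hy hθ)
    have huq : Real.exp (θ * y) < q := lt_trans hup hpq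
    have := hsign y
    nlinarith [mul_pos (mul_pos hA21 hθ) (mul_pos (sub_pos.2 hup) (sub_pos.2 huq))]
  have hdneg : ∀ y : ℝ, xs2 < y → y < xb2 →
      A21 * θ * Real.exp (θ * y) - A22 * θ * Real.exp (-(θ * y)) - 1 / ρ + lam < 0 := by
    intro y hy1 hy2
    have hu0 : 0 < Real.exp (θ * y) := Real.exp_pos _
    have hup : p < Real.exp (θ * y) := Real.exp_lt_exp.2 (mul_lt_mul_of_pos_left hy1 hθ)
    have huq : Real.exp (θ * y) < q := Real.exp_lt_exp.2 (mul_lt_mul_of_pos_left hy2 hθ)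
    have := hsign y
    nlinarith [mul_pos (mul_pos hA21 hθ) (mul_pos (sub_pos.2 hup) (sub_pos.2 (by linarith : (0:ℝ) < q - Real.exp (θ * y))))]
  have hgcont : Continuous g := by
    have : Differentiable ℝ g := fun y => (hgD y).differentiableAt
    exact this.continuous
  have hmono : StrictMonoOn g (Set.Iic xs2) := by
    apply strictMonoOn_of_deriv_pos (convex_Iic xs2) hgcont.continuousOn
    intro y hy
    rw [interior_Iic] at hy
    rw [(hgD y).deriv]
    exact hdpos y hy
  have hanti : StrictAntiOn g (Set.Icc xs2 xb2) := by
    apply strictAntiOn_of_deriv_neg (convex_Icc xs2 xb2) hgcont.continuousOn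
    intro y hy
    rw [interior_Icc] at hy
    rw [(hgD y).deriv]
    exact hdneg y hy.1 hy.2
  -- evaluation of V2t
  set V : ℝ → ℝ := V2t ρ σ lam lamt c ct s2 A21 A22 xb1 xb2 xs1 xs2 with hVdef
  have hV_left : ∀ y : ℝ, y ≤ xb1 → V y + lam * y = g xb1 - (lam - lamt) * (xb1 - y) := by
    intro y hy
    rw [hVdef, V2t, ← hθdef, if_pos hy, hgdef]
    simp only
    rw [e9]
    ring
  have hV_mid : ∀ y : ℝ, xb1 < y → y < xb2 → V y + lam * y = g y := by
    intro y hy1 hy2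
    rw [hVdef, V2t, ← hθdef, if_neg (not_le.2 hy1), if_pos hy2, hgdef]
  have hV_right : ∀ y : ℝ, xb2 ≤ y → V y + lam * y = g xs2 - c := by
    intro y hy
    rw [hVdef, V2t, ← hθdef, if_neg (by linarith), if_neg (not_lt.2 hy), hgdef]
    simp only
    ring
  have hΓs : Γ₂ xs2 = g xs2 := by rw [hΓ₂]; exact hV_mid xs2 ho3 ho4
  -- part (a)
  have ha : ∀ y : ℝ, y ≠ xs2 → Γ₂ y < Γ₂ xs2 := by
    intro y hne
    rw [hΓs, hΓ₂]
    rcases le_or_gt y xb1 with hy | hy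
    · have h := hV_left y hy
      have hle : g xb1 < g xs2 := hmono (Set.mem_Iic.2 (le_of_lt ho3)) (Set.mem_Iic.2 le_rfl) ho3
      nlinarith [mul_nonneg (by linarith : (0:ℝ) ≤ lam - lamt) (by linarith : (0:ℝ) ≤ xb1 - y)]
    · rcases lt_or_ge y xb2 with hy2 | hy2
      · rw [hV_mid y hy hy2]
        rcases lt_trichotomy y xs2 with h | h | h
        · exact hmono (Set.mem_Iic.2 (le_of_lt h)) (Set.mem_Iic.2 le_rfl) h
        · exact absurd h hne
        · exact hanti (Set.mem_Icc.2 ⟨le_rfl, le_of_lt ho4⟩) (Set.mem_Icc.2 ⟨le_of_lt h, le_of_lt hy2⟩) h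
      · rw [hV_right y hy2]
        linarith
  -- monotonicity of Γ₂ below xs2
  have hM : ∀ a b : ℝ, a ≤ b → b ≤ xs2 → Γ₂ a ≤ Γ₂ b := by
    intro a b hab hb
    rw [hΓ₂, hΓ₂]
    rcases le_or_gt b xb1 with hbb | hbb
    · rw [hV_left a (le_trans hab hbb), hV_left b hbb]
      nlinarith [mul_nonneg (by linarith : (0:ℝ) ≤ lam - lamt) (by linarith : (0:ℝ) ≤ b - a)]
    · have hb2 : b < xb2 := lt_of_le_of_lt hb ho4
      rw [hV_mid b hbb hb2]
      rcases le_or_gt a xb1 with haa | haa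
      · rw [hV_left a haa]
        have : g xb1 ≤ g b := hmono.monotoneOn (Set.mem_Iic.2 (le_trans (le_of_lt hbb) hb)) (Set.mem_Iic.2 hb) (le_of_lt hbb)
        nlinarith [mul_nonneg (by linarith : (0:ℝ) ≤ lam - lamt) (by linarith : (0:ℝ) ≤ xb1 - a)]
      · rw [hV_mid a haa (lt_of_le_of_lt hab hb2)]
        exact hmono.monotoneOn (Set.mem_Iic.2 (le_trans hab hb)) (Set.mem_Iic.2 hb) hab
  refine ⟨ha, ?_, ?_, ?_⟩
  · intro x hx
    apply IsGreatest.csSup_eq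
    constructor
    · exact ⟨x, self_mem_Iic, rfl⟩
    · rintro z ⟨y, hy, rfl⟩
      exact hM y x hy hx
  · intro x hx y hy hne
    have := ha y hne
    rw [hΓ₂ y, hΓ₂ xs2] at this
    linarith
  · intro x hx
    apply IsGreatest.csSup_eq
    constructor
    · exact ⟨x, self_mem_Iic, by ring_nf⟩
    · rintro z ⟨y, hy, rfl⟩
      have := hM y x hy hx
      rw [hΓ₂ y, hΓ₂ x] at this
      simp only
      linarith
end

section
/- Suppose the 8-tuple (A₁₁, A₁₂, A₂₁, A₂₂, x̄₁, x̄₂, x₁*, x₂*) satisfies the system (S) and additionally A₂₁ > 0 and A₂₂ < 0, and define the intervention operator M₂Ṽ₂(x) = sup_{y ≤ x} (Ṽ₂(y) − c − λ(x − y)). Then M₂Ṽ₂(x) < Ṽ₂(x) for every x < x̄₂, and M₂Ṽ₂(x) = Ṽ₂(x) for every x ≥ x̄₂. -/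
open Real Filter Set

lemma hasDerivAt_phi2 (ρ θ s2 A21 A22 x : ℝ) :
    HasDerivAt (phi2 ρ θ s2 A21 A22)
      (A21 * θ * Real.exp (θ * x) - A22 * θ * Real.exp (-(θ * x)) - 1 / ρ) x := by
  have h1 : HasDerivAt (fun x : ℝ => θ * x) θ x := by
    simpa using (hasDerivAt_id x).const_mul θ
  have h2 := h1.exp
  have h3 := h1.neg.exp
  have h4 : HasDerivAt (fun x : ℝ => (s2 - x) / ρ) (-1 / ρ) x := by
    simpa using ((hasDerivAt_const x s2).sub (hasDerivAt_id x)).div_const ρ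
  have H := ((h2.const_mul A21).add (h3.const_mul A22)).add h4
  exact H.congr_deriv (by simp only [Pi.neg_apply]; ring)

set_option maxHeartbeats 4000000

/-- The intervention operator `M₂Ṽ₂(x) = sup_{y ≤ x}(Ṽ₂(y) − c − λ(x − y))`
is strictly below `Ṽ₂` on `(−∞, x̄₂)` and equals `Ṽ₂` on `[x̄₂, ∞)`. -/
theorem stmt_10 (ρ σ lam lamt c ct s1 s2 : ℝ) (hρ : 0 < ρ) (hσ : 0 < σ)
    (h1 : 0 < 1 - lam * ρ) (h2 : lamt ≤ lam) (h3 : 0 ≤ lamt)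
    (h4 : ct ≤ c) (h5 : 0 ≤ ct) (h6 : 0 < c)
    (h7 : (c, lam) ≠ (ct, lamt)) (h8 : s1 < s2)
    (A11 A12 A21 A22 xb1 xb2 xs1 xs2 : ℝ)
    (hS : SystemS ρ σ lam lamt c ct s1 s2 A11 A12 A21 A22 xb1 xb2 xs1 xs2)
    (hA21 : 0 < A21) (hA22 : A22 < 0)
    (M2V2 : ℝ → ℝ)
    (hM : ∀ x : ℝ, M2V2 x = sSup
      ((fun y => V2t ρ σ lam lamt c ct s2 A21 A22 xb1 xb2 xs1 xs2 y - c
        - lam * (x - y)) '' Set.Iic x)) :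
    (∀ x : ℝ, x < xb2 →
      M2V2 x < V2t ρ σ lam lamt c ct s2 A21 A22 xb1 xb2 xs1 xs2 x) ∧
    (∀ x : ℝ, xb2 ≤ x →
      M2V2 x = V2t ρ σ lam lamt c ct s2 A21 A22 xb1 xb2 xs1 xs2 x) := by
  obtain ⟨o1, o2, o3, o4, _, _, _, _, _, e6, _, e8, e9, e10⟩ := hS
  set θ : ℝ := Real.sqrt (2 * ρ / σ ^ 2) with hθdef
  set f : ℝ → ℝ := phi2 ρ θ s2 A21 A22 with hfdef
  set V : ℝ → ℝ := V2t ρ σ lam lamt c ct s2 A21 A22 xb1 xb2 xs1 xs2 with hVdef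
  set g : ℝ → ℝ := fun y => f y + lam * y with hgdef
  set D : ℝ → ℝ := fun y =>
    A21 * θ * Real.exp (θ * y) - A22 * θ * Real.exp (-(θ * y)) - 1 / ρ + lam with hDdef
  clear_value θ f V g D
  have hθ : 0 < θ := by rw [hθdef]; exact Real.sqrt_pos.mpr (by positivity)
  -- evaluation lemmas for V
  have hVlow : ∀ y : ℝ, y ≤ xb1 → V y = f xs1 + ct + lamt * (xs1 - y) := by
    intro y hy
    rw [hVdef, hfdef, hθdef]
    simp only [V2t, if_pos hy]
  have hVmid : ∀ y : ℝ, xb1 < y → y < xb2 → V y = f y := by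
    intro y hy1 hy2
    rw [hVdef, hfdef, hθdef]
    simp only [V2t, if_neg (not_le.mpr hy1), if_pos hy2]
  have hVhigh : ∀ y : ℝ, xb2 ≤ y → V y = f xs2 - c - lam * (y - xs2) := by
    intro y hy
    have hy1 : ¬ y ≤ xb1 := by push_neg; linarith only [hy, o3, o4]
    have hy2 : ¬ y < xb2 := by push_neg; linarith only [hy]
    rw [hVdef, hfdef, hθdef]
    simp only [V2t, if_neg hy1, if_neg hy2]
  -- derivative of g
  have hgD : ∀ y : ℝ, HasDerivAt g (D y) y := by
    intro y
    have H := (hasDerivAt_phi2 ρ θ s2 A21 A22 y).add ((hasDerivAt_id y).const_mul lam)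
    rw [hgdef, hDdef]
    have hfun : (fun y => f y + lam * y)
        = fun x => phi2 ρ θ s2 A21 A22 x + lam * x := by
      funext z; rw [hfdef]
    rw [hfun]
    exact H.congr_deriv (by simp)
  have hderivf : ∀ y : ℝ, deriv f y
      = A21 * θ * Real.exp (θ * y) - A22 * θ * Real.exp (-(θ * y)) - 1 / ρ := by
    intro y
    rw [hfdef]
    exact (hasDerivAt_phi2 ρ θ s2 A21 A22 y).deriv
  have hD1 : D xs2 = 0 := by
    rw [hderivf xs2] at e6
    rw [hDdef]; simp only; linarith only [e6]
  have hD2 : D xb2 = 0 := by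
    rw [hderivf xb2] at e8
    rw [hDdef]; simp only; linarith only [e8]
  -- sign analysis of D via the quadratic in u = exp(θ y)
  have hkey : ∀ y : ℝ, D y * Real.exp (θ * y)
      = A21 * θ * (Real.exp (θ * y)) ^ 2 + (lam - 1 / ρ) * Real.exp (θ * y)
        + (-(A22 * θ)) := by
    intro y
    have hmul : Real.exp (-(θ * y)) * Real.exp (θ * y) = 1 := by
      rw [← Real.exp_add]; ring_nf; exact Real.exp_zero
    rw [hDdef]
    simp only
    linear_combination (-(A22 * θ)) * hmul
  obtain ⟨u1, hu1def⟩ : ∃ u1, u1 = Real.exp (θ * xs2) := ⟨_, rfl⟩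
  obtain ⟨u2, hu2def⟩ : ∃ u2, u2 = Real.exp (θ * xb2) := ⟨_, rfl⟩
  have hu1 : 0 < u1 := hu1def ▸ Real.exp_pos _
  have hu2 : 0 < u2 := hu2def ▸ Real.exp_pos _
  have hu12 : u1 < u2 := by
    rw [hu1def, hu2def]
    exact Real.exp_lt_exp.mpr (mul_lt_mul_of_pos_left o4 hθ)
  have ha : 0 < A21 * θ := by positivity
  have eq1 : A21 * θ * u1 ^ 2 + (lam - 1 / ρ) * u1 + (-(A22 * θ)) = 0 := by
    have h := hkey xs2
    rw [hD1, ← hu1def] at h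
    simpa using h.symm
  have eq2 : A21 * θ * u2 ^ 2 + (lam - 1 / ρ) * u2 + (-(A22 * θ)) = 0 := by
    have h := hkey xb2
    rw [hD2, ← hu2def] at h
    simpa using h.symm
  have hk : lam - 1 / ρ = -(A21 * θ) * (u1 + u2) := by
    have h0 : (u1 - u2) * (A21 * θ * (u1 + u2) + (lam - 1 / ρ)) = 0 := by
      linear_combination eq1 - eq2
    have h1' : u1 - u2 ≠ 0 := by
      intro h
      have h12 := sub_eq_zero.mp h
      linarith only [hu12, h12]
    have hres := (mul_eq_zero.mp h0).resolve_left h1'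
    linarith only [hres]
  have hb : -(A22 * θ) = A21 * θ * u1 * u2 := by linear_combination eq1 - u1 * hk
  have hfactor : ∀ y : ℝ, D y * Real.exp (θ * y)
      = A21 * θ * (Real.exp (θ * y) - u1) * (Real.exp (θ * y) - u2) := by
    intro y
    rw [hkey y, hk, hb]; ring
  have hDpos : ∀ y : ℝ, y < xs2 → 0 < D y := by
    intro y hy
    have hu : 0 < Real.exp (θ * y) := Real.exp_pos _
    have hlt : Real.exp (θ * y) < u1 := by
      rw [hu1def]; exact Real.exp_lt_exp.mpr (mul_lt_mul_of_pos_left hy hθ)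
    have hpos : 0 < D y * Real.exp (θ * y) := by
      rw [hfactor y]
      have hrw : A21 * θ * (Real.exp (θ * y) - u1) * (Real.exp (θ * y) - u2)
          = A21 * θ * ((u1 - Real.exp (θ * y)) * (u2 - Real.exp (θ * y))) := by ring
      rw [hrw]
      exact mul_pos ha (mul_pos (sub_pos.mpr hlt) (sub_pos.mpr (hlt.trans hu12)))
    by_contra h
    push_neg at h
    have hcontra := mul_nonpos_of_nonpos_of_nonneg h hu.le
    linarith only [hpos, hcontra]
  have hDneg : ∀ y : ℝ, xs2 < y → y < xb2 → D y < 0 := by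
    intro y hy1 hy2
    have hu : 0 < Real.exp (θ * y) := Real.exp_pos _
    have hl1 : u1 < Real.exp (θ * y) := by
      rw [hu1def]; exact Real.exp_lt_exp.mpr (mul_lt_mul_of_pos_left hy1 hθ)
    have hl2 : Real.exp (θ * y) < u2 := by
      rw [hu2def]; exact Real.exp_lt_exp.mpr (mul_lt_mul_of_pos_left hy2 hθ)
    have hneg : D y * Real.exp (θ * y) < 0 := by
      rw [hfactor y]
      have hrw : A21 * θ * (Real.exp (θ * y) - u1) * (Real.exp (θ * y) - u2)
          = -(A21 * θ * ((Real.exp (θ * y) - u1) * (u2 - Real.exp (θ * y)))) := by ring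
      rw [hrw]
      exact neg_lt_zero.mpr (mul_pos ha (mul_pos (sub_pos.mpr hl1) (sub_pos.mpr hl2)))
    by_contra h
    push_neg at h
    have hcontra := mul_nonneg h hu.le
    linarith only [hneg, hcontra]
  -- monotonicity of g
  have hgdiff : Differentiable ℝ g := fun y => (hgD y).differentiableAt
  have hgderiv : ∀ y : ℝ, deriv g y = D y := fun y => (hgD y).deriv
  have hmono : StrictMonoOn g (Iic xs2) := by
    apply strictMonoOn_of_deriv_pos (convex_Iic _) hgdiff.continuous.continuousOn
    intro y hy
    rw [interior_Iic] at hy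
    rw [hgderiv]; exact hDpos y hy
  have hanti : StrictAntiOn g (Icc xs2 xb2) := by
    apply strictAntiOn_of_deriv_neg (convex_Icc _ _) hgdiff.continuous.continuousOn
    intro y hy
    rw [interior_Icc] at hy
    rw [hgderiv]; exact hDneg y hy.1 hy.2
  -- value matching identities in terms of g
  have hg_eval : ∀ y : ℝ, g y = f y + lam * y := by intro y; rw [hgdef]
  have hgb2 : g xb2 = g xs2 - c := by
    rw [hg_eval, hg_eval]; linarith only [e10]
  have hgb1 : g xb1 = f xs1 + ct + lamt * (xs1 - xb1) + lam * xb1 := by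
    rw [hg_eval]; linarith only [e9]
  -- low-branch bound: for y ≤ xb1, V y + lam y ≤ g xb1
  have hlowb : ∀ y : ℝ, y ≤ xb1 → V y + lam * y ≤ g xb1 := by
    intro y hy
    rw [hVlow y hy, hgb1]
    have hint := mul_le_mul_of_nonneg_left hy (sub_nonneg.mpr h2)
    linarith only [hint]
  -- global bound: V y + lam y ≤ g xs2 for all y
  have hWbound : ∀ y : ℝ, V y + lam * y ≤ g xs2 := by
    intro y
    by_cases hy : y ≤ xb1
    · have ha1 := hlowb y hy
      have ha2 : g xb1 ≤ g xs2 :=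
        hmono.monotoneOn (mem_Iic.mpr o3.le) (mem_Iic.mpr le_rfl) o3.le
      linarith only [ha1, ha2]
    · push_neg at hy
      by_cases hy2 : y < xb2
      · rw [hVmid y hy hy2]
        by_cases hy3 : y ≤ xs2
        · have hmn := hmono.monotoneOn (mem_Iic.mpr hy3) (mem_Iic.mpr le_rfl) hy3
          rw [hg_eval y] at hmn
          exact hmn
        · push_neg at hy3
          have hmn := hanti.antitoneOn (mem_Icc.mpr ⟨le_rfl, o4.le⟩)
            (mem_Icc.mpr ⟨hy3.le, hy2.le⟩) hy3.le
          rw [hg_eval y] at hmn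
          exact hmn
      · push_neg at hy2
        rw [hVhigh y hy2, hg_eval]
        linarith only [h6]
  constructor
  · -- x < xb2 : strict inequality
    intro x hx
    rw [hM x]
    have hne : ((fun y => V y - c - lam * (x - y)) '' Set.Iic x).Nonempty :=
      ⟨_, ⟨x, mem_Iic.mpr le_rfl, rfl⟩⟩
    by_cases hcase : x ≤ xs2
    · -- bound by V x + lam x
      have hub : ∀ y : ℝ, y ≤ x → V y + lam * y ≤ V x + lam * x := by
        intro y hy
        by_cases hx1 : x ≤ xb1
        · have hy1 : y ≤ xb1 := le_trans hy hx1
          rw [hVlow y hy1, hVlow x hx1]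
          have hint := mul_le_mul_of_nonneg_left hy (sub_nonneg.mpr h2)
          linarith only [hint]
        · push_neg at hx1
          have hVx : V x + lam * x = g x := by rw [hVmid x hx1 hx, hg_eval]
          rw [hVx]
          by_cases hy1 : y ≤ xb1
          · have ha1 := hlowb y hy1
            have ha2 : g xb1 ≤ g x :=
              hmono.monotoneOn (mem_Iic.mpr (le_trans hx1.le hcase))
                (mem_Iic.mpr hcase) hx1.le
            linarith only [ha1, ha2]
          · push_neg at hy1
            rw [hVmid y hy1 (lt_of_le_of_lt hy hx)]
            have hmn := hmono.monotoneOn (mem_Iic.mpr (le_trans hy hcase))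
              (mem_Iic.mpr hcase) hy
            rw [hg_eval y] at hmn
            exact hmn
      have hle : sSup ((fun y => V y - c - lam * (x - y)) '' Set.Iic x) ≤ V x - c := by
        apply csSup_le hne
        rintro z ⟨y, hy, rfl⟩
        have hthis := hub y (mem_Iic.mp hy)
        simp only
        linarith only [hthis]
      linarith only [hle, h6]
    · -- xs2 < x < xb2 : bound by g xs2
      push_neg at hcase
      have hVx : V x = f x := hVmid x (lt_trans o3 hcase) hx
      have hle : sSup ((fun y => V y - c - lam * (x - y)) '' Set.Iic x)
          ≤ g xs2 - c - lam * x := by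
        apply csSup_le hne
        rintro z ⟨y, hy, rfl⟩
        have hthis := hWbound y
        simp only
        linarith only [hthis]
      have hstrict : g xb2 < g x :=
        hanti (mem_Icc.mpr ⟨hcase.le, hx.le⟩) (mem_Icc.mpr ⟨o4.le, le_rfl⟩) hx
      have hfin : g xs2 - c - lam * x < V x := by
        rw [hVx]
        have hgx : g x = f x + lam * x := hg_eval x
        linarith only [hgb2, hstrict, hgx]
      linarith only [hle, hfin]
  · -- x ≥ xb2 : equality
    intro x hx
    rw [hM x]
    apply IsGreatest.csSup_eq
    constructor
    · refine ⟨xs2, mem_Iic.mpr (by linarith only [o4, hx]), ?_⟩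
      simp only
      rw [hVmid xs2 o3 o4, hVhigh x hx]
    · rintro z ⟨y, hy, rfl⟩
      rw [hVhigh x hx]
      have h1' := hWbound y
      rw [hg_eval] at h1'
      simp only
      linarith only [h1']
end

section
/- Assume c̃ = 0 and λ = λ̃. Then, as c → 0⁺: x̄₁(c) → s̃, x̄₂(c) → s̃, x₁*(c) → s̃, x₂*(c) → s̃, A₂₁(c) → e^{−θs̃}·η/(2θ), and A₂₂(c) → −e^{θs̃}·η/(2θ). -/
open Real Filter Set

/-- Limits as c → 0⁺ of the explicit Nash-equilibrium parameters in the
case c̃ = 0, λ = λ̃. -/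
theorem stmt_12
    (ρ σ lam lamt ct s1 s2 : ℝ) (hρ : 0 < ρ) (hσ : 0 < σ)
    (h1 : 0 < 1 - lam * ρ) (h2 : lamt ≤ lam) (h3 : 0 ≤ lamt)
    (h5 : 0 ≤ ct) (h8 : s1 < s2)
    (θ η st : ℝ) (hθ : θ = Real.sqrt (2 * ρ / σ ^ 2))
    (hη : η = (1 - lam * ρ) / ρ) (hst : st = (s1 + s2) / 2)
    (ξ : ℝ → ℝ)
    (hξ : ∀ c : ℝ, 0 < c → ξ c ∈ Set.Ioo 0 η ∧
      2 * ξ c + θ * c - η * Real.log ((η + ξ c) / (η - ξ c)) = 0)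
    (Γ : ℝ → ℝ)
    (hΓ : ∀ c : ℝ, Γ c = θ * (c - ct) / (4 * ξ c)
      + θ * c * (lam - lamt) / (4 * η * ξ c) + (lam - lamt) / (2 * η))
    (xb1 xb2 xs1 xs2 : ℝ → ℝ)
    (hxb1 : ∀ c : ℝ, xb1 c = st - (1 / θ) * Real.log
      (Real.sqrt ((η + ξ c) / (η - ξ c)) * (Real.sqrt (Γ c + 1) + Real.sqrt (Γ c))))
    (hxb2 : ∀ c : ℝ, xb2 c = st + (1 / θ) * Real.log
      (Real.sqrt ((η + ξ c) / (η - ξ c)) * (Real.sqrt (Γ c + 1) + Real.sqrt (Γ c))))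
    (hxs1 : ∀ c : ℝ, xs1 c = st - (1 / θ) * Real.log
      (Real.sqrt ((η - ξ c) / (η + ξ c)) * (Real.sqrt (Γ c + 1) + Real.sqrt (Γ c))))
    (hxs2 : ∀ c : ℝ, xs2 c = st + (1 / θ) * Real.log
      (Real.sqrt ((η - ξ c) / (η + ξ c)) * (Real.sqrt (Γ c + 1) + Real.sqrt (Γ c))))
    (A21 A22 : ℝ → ℝ)
    (hA21 : ∀ c : ℝ, A21 c = Real.exp (-(θ * st))
      * (Real.sqrt (η ^ 2 - (ξ c) ^ 2) / (2 * θ))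
      * (Real.sqrt (Γ c + 1) - Real.sqrt (Γ c)))
    (hA22 : ∀ c : ℝ, A22 c = Real.exp (θ * st)
      * (Real.sqrt (η ^ 2 - (ξ c) ^ 2) / (2 * θ))
      * (-Real.sqrt (Γ c + 1) - Real.sqrt (Γ c)))
    (hct0 : ct = 0) (hll : lam = lamt) :
    Filter.Tendsto xb1 (nhdsWithin 0 (Set.Ioi 0)) (nhds st) ∧
    Filter.Tendsto xb2 (nhdsWithin 0 (Set.Ioi 0)) (nhds st) ∧
    Filter.Tendsto xs1 (nhdsWithin 0 (Set.Ioi 0)) (nhds st) ∧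
    Filter.Tendsto xs2 (nhdsWithin 0 (Set.Ioi 0)) (nhds st) ∧
    Filter.Tendsto A21 (nhdsWithin 0 (Set.Ioi 0))
      (nhds (Real.exp (-(θ * st)) * η / (2 * θ))) ∧
    Filter.Tendsto A22 (nhdsWithin 0 (Set.Ioi 0))
      (nhds (-(Real.exp (θ * st) * η / (2 * θ)))) := by
  subst hct0
  subst hll
  have hη0 : 0 < η := by rw [hη]; positivity
  have hθ0 : 0 < θ := by
    rw [hθ]; apply Real.sqrt_pos.2; positivity
  set L := nhdsWithin (0:ℝ) (Set.Ioi 0) with hL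
  set G : ℝ → ℝ := fun x => η * (Real.log (η + x) - Real.log (η - x)) - 2 * x with hGdef
  -- derivative of G
  have hGd : ∀ x : ℝ, -η < x → x < η →
      HasDerivAt G (2 * x ^ 2 / ((η + x) * (η - x))) x := by
    intro x hx1 hx2
    have hp1 : 0 < η + x := by linarith
    have hp2 : 0 < η - x := by linarith
    have d1 : HasDerivAt (fun y : ℝ => Real.log (η + y)) (1 / (η + x)) x := by
      have := (Real.hasDerivAt_log hp1.ne').comp x ((hasDerivAt_id x).const_add η)
      simpa [one_div, Function.comp_def] using this
    have d2 : HasDerivAt (fun y : ℝ => Real.log (η - y)) (-(1 / (η - x))) x := by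
      have := (Real.hasDerivAt_log hp2.ne').comp x ((hasDerivAt_id x).const_sub η)
      simpa [one_div, Function.comp_def] using this
    have d3 : HasDerivAt G (η * (1 / (η + x) - -(1 / (η - x))) - 2 * 1) x := by
      exact (((d1.sub d2).const_mul η)).sub ((hasDerivAt_id x).const_mul 2)
    convert d3 using 1
    field_simp
    ring
  have hG0 : G 0 = 0 := by simp [hGdef]
  -- G is strictly monotone on [0, η)
  have hmono : StrictMonoOn G (Set.Ico 0 η) := by
    apply strictMonoOn_of_deriv_pos (convex_Ico 0 η)
    · apply ContinuousOn.sub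
      · apply ContinuousOn.mul continuousOn_const
        apply ContinuousOn.sub
        · apply ContinuousOn.log (continuousOn_const.add continuousOn_id)
          intro x hx
          have : 0 < η + x := by rcases hx with ⟨h1', h2'⟩; linarith
          exact this.ne'
        · apply ContinuousOn.log (continuousOn_const.sub continuousOn_id)
          intro x hx
          have : 0 < η - x := by rcases hx with ⟨h1', h2'⟩; linarith
          exact this.ne'
      · exact (continuous_const.mul continuous_id).continuousOn
    · intro x hx
      rw [interior_Ico] at hx
      rcases hx with ⟨hx1, hx2⟩
      rw [(hGd x (by linarith) hx2).deriv]
      have hp1 : 0 < η + x := by linarith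
      have hp2 : 0 < η - x := by linarith
      positivity
  -- key equation: θ * c = G (ξ c) for c > 0
  have hkey : ∀ c : ℝ, 0 < c → θ * c = G (ξ c) := by
    intro c hc
    obtain ⟨⟨hξ1, hξ2⟩, heq⟩ := hξ c hc
    have hp1 : 0 < η + ξ c := by linarith
    have hp2 : 0 < η - ξ c := by linarith
    rw [Real.log_div hp1.ne' hp2.ne'] at heq
    simp only [hGdef]
    linarith
  -- ξ tends to 0 within Ioi 0
  have hξmem : ∀ᶠ c in L, ξ c ∈ Set.Ioi (0:ℝ) := by
    filter_upwards [self_mem_nhdsWithin] with c hc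
    exact (hξ c hc).1.1
  have hξ0 : Filter.Tendsto ξ L (nhds 0) := by
    rw [tendsto_order]
    constructor
    · intro a ha
      filter_upwards [self_mem_nhdsWithin] with c hc
      exact lt_trans ha (hξ c hc).1.1
    · intro b hb
      rcases le_or_gt η b with hbη | hbη
      · filter_upwards [self_mem_nhdsWithin] with c hc
        exact lt_of_lt_of_le (hξ c hc).1.2 hbη
      · have hGb : 0 < G b := by
          have := hmono (Set.mem_Ico.2 ⟨le_refl 0, hη0⟩) (Set.mem_Ico.2 ⟨hb.le, hbη⟩) hb
          rwa [hG0] at this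
        have hδ : 0 < G b / θ := by positivity
        filter_upwards [Ioo_mem_nhdsGT_of_mem (Set.mem_Ico.2 ⟨le_refl 0, hδ⟩)]
          with c hc
        rcases hc with ⟨hc1, hc2⟩
        by_contra hcon
        push_neg at hcon
        obtain ⟨⟨hξ1, hξ2⟩, _⟩ := hξ c hc1
        have hle : G b ≤ G (ξ c) :=
          hmono.monotoneOn (Set.mem_Ico.2 ⟨hb.le, hbη⟩)
            (Set.mem_Ico.2 ⟨hξ1.le, hξ2⟩) hcon
        have : θ * c < G b := by
          calc θ * c < θ * (G b / θ) := by
                exact mul_lt_mul_of_pos_left hc2 hθ0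
            _ = G b := by field_simp
        linarith [hkey c hc1]
  have hξ0' : Filter.Tendsto ξ L (nhdsWithin 0 (Set.Ioi 0)) :=
    tendsto_nhdsWithin_iff.2 ⟨hξ0, hξmem⟩
  -- Γ tends to 0
  have hslope : Filter.Tendsto (slope G 0) (nhdsWithin 0 {(0:ℝ)}ᶜ) (nhds 0) := by
    have h0 : HasDerivAt G 0 0 := by
      have := hGd 0 (by linarith) hη0
      simpa using this
    exact hasDerivAt_iff_tendsto_slope.1 h0
  have hΓ0 : Filter.Tendsto Γ L (nhds 0) := by
    have hcomp : Filter.Tendsto (fun c => slope G 0 (ξ c)) L (nhds 0) := by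
      apply hslope.comp
      apply tendsto_nhdsWithin_mono_right _ hξ0'
      intro x hx
      exact ne_of_gt hx
    have heq : ∀ᶠ c in L, (1/4 : ℝ) * slope G 0 (ξ c) = Γ c := by
      filter_upwards [self_mem_nhdsWithin] with c hc
      obtain ⟨⟨hξ1, hξ2⟩, _⟩ := hξ c hc
      rw [hΓ c]
      rw [slope_def_field, hG0, ← hkey c hc]
      field_simp
      ring
    have := (hcomp.const_mul (1/4 : ℝ)).congr' heq
    simpa using this
  -- auxiliary limits
  have hq1 : Filter.Tendsto (fun c => Real.sqrt ((η + ξ c) / (η - ξ c))) L (nhds 1) := by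
    have hdiv : Filter.Tendsto (fun c => (η + ξ c) / (η - ξ c)) L (nhds 1) := by
      have := ((tendsto_const_nhds (x := η)).add hξ0).div ((tendsto_const_nhds (x := η)).sub hξ0)
        (by simpa using hη0.ne')
      simpa [Pi.div_def, div_self hη0.ne'] using this
    have := (Real.continuous_sqrt.tendsto 1).comp hdiv
    simpa [Function.comp_def] using this
  have hq2 : Filter.Tendsto (fun c => Real.sqrt ((η - ξ c) / (η + ξ c))) L (nhds 1) := by
    have hdiv : Filter.Tendsto (fun c => (η - ξ c) / (η + ξ c)) L (nhds 1) := by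
      have := ((tendsto_const_nhds (x := η)).sub hξ0).div ((tendsto_const_nhds (x := η)).add hξ0)
        (by simpa using hη0.ne')
      simpa [Pi.div_def, div_self hη0.ne'] using this
    have := (Real.continuous_sqrt.tendsto 1).comp hdiv
    simpa [Function.comp_def] using this
  have hΓ1 : Filter.Tendsto (fun c => Real.sqrt (Γ c + 1)) L (nhds 1) := by
    have := (Real.continuous_sqrt.tendsto 1).comp
      (by simpa using hΓ0.add (tendsto_const_nhds (x := (1:ℝ))) :
        Filter.Tendsto (fun c => Γ c + 1) L (nhds 1))
    simpa [Function.comp_def] using this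
  have hΓs : Filter.Tendsto (fun c => Real.sqrt (Γ c)) L (nhds 0) := by
    have := (Real.continuous_sqrt.tendsto 0).comp hΓ0
    simpa [Function.comp_def] using this
  have hr : Filter.Tendsto (fun c => Real.sqrt (Γ c + 1) + Real.sqrt (Γ c)) L (nhds 1) := by
    have := hΓ1.add hΓs
    simpa using this
  have hlog1 : Filter.Tendsto (fun c => Real.log
      (Real.sqrt ((η + ξ c) / (η - ξ c)) * (Real.sqrt (Γ c + 1) + Real.sqrt (Γ c))))
      L (nhds 0) := by
    have hprod := hq1.mul hr
    rw [mul_one] at hprod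
    have := ((Real.continuousAt_log one_ne_zero).tendsto).comp hprod
    simpa [Real.log_one, Function.comp_def] using this
  have hlog2 : Filter.Tendsto (fun c => Real.log
      (Real.sqrt ((η - ξ c) / (η + ξ c)) * (Real.sqrt (Γ c + 1) + Real.sqrt (Γ c))))
      L (nhds 0) := by
    have hprod := hq2.mul hr
    rw [mul_one] at hprod
    have := ((Real.continuousAt_log one_ne_zero).tendsto).comp hprod
    simpa [Real.log_one, Function.comp_def] using this
  have hsq : Filter.Tendsto (fun c => Real.sqrt (η ^ 2 - (ξ c) ^ 2)) L (nhds η) := by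
    have hdiv : Filter.Tendsto (fun c => η ^ 2 - (ξ c) ^ 2) L (nhds (η ^ 2)) := by
      have := (tendsto_const_nhds (x := η^2)).sub ((hξ0.mul hξ0))
      simpa [sq] using this
    have := (Real.continuous_sqrt.tendsto (η ^ 2)).comp hdiv
    simpa [Real.sqrt_sq hη0.le, Function.comp_def] using this
  refine ⟨?_, ?_, ?_, ?_, ?_, ?_⟩
  · have : Filter.Tendsto (fun c => st - (1 / θ) * Real.log
        (Real.sqrt ((η + ξ c) / (η - ξ c)) * (Real.sqrt (Γ c + 1) + Real.sqrt (Γ c))))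
        L (nhds st) := by
      have := (tendsto_const_nhds (x := st)).sub ((hlog1.const_mul (1/θ)))
      simpa using this
    exact this.congr (fun c => (hxb1 c).symm)
  · have : Filter.Tendsto (fun c => st + (1 / θ) * Real.log
        (Real.sqrt ((η + ξ c) / (η - ξ c)) * (Real.sqrt (Γ c + 1) + Real.sqrt (Γ c))))
        L (nhds st) := by
      have := (tendsto_const_nhds (x := st)).add ((hlog1.const_mul (1/θ)))
      simpa using this
    exact this.congr (fun c => (hxb2 c).symm)
  · have : Filter.Tendsto (fun c => st - (1 / θ) * Real.log
        (Real.sqrt ((η - ξ c) / (η + ξ c)) * (Real.sqrt (Γ c + 1) + Real.sqrt (Γ c))))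
        L (nhds st) := by
      have := (tendsto_const_nhds (x := st)).sub ((hlog2.const_mul (1/θ)))
      simpa using this
    exact this.congr (fun c => (hxs1 c).symm)
  · have : Filter.Tendsto (fun c => st + (1 / θ) * Real.log
        (Real.sqrt ((η - ξ c) / (η + ξ c)) * (Real.sqrt (Γ c + 1) + Real.sqrt (Γ c))))
        L (nhds st) := by
      have := (tendsto_const_nhds (x := st)).add ((hlog2.const_mul (1/θ)))
      simpa using this
    exact this.congr (fun c => (hxs2 c).symm)
  · have h : Filter.Tendsto (fun c => Real.exp (-(θ * st))
        * (Real.sqrt (η ^ 2 - (ξ c) ^ 2) / (2 * θ))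
        * (Real.sqrt (Γ c + 1) - Real.sqrt (Γ c))) L
        (nhds (Real.exp (-(θ * st)) * (η / (2 * θ)) * 1)) := by
      exact (tendsto_const_nhds.mul (hsq.div_const (2*θ))).mul
        (by simpa using hΓ1.sub hΓs)
    have h' := h.congr (fun c => (hA21 c).symm)
    convert h' using 2
    ring
  · have h : Filter.Tendsto (fun c => Real.exp (θ * st)
        * (Real.sqrt (η ^ 2 - (ξ c) ^ 2) / (2 * θ))
        * (-Real.sqrt (Γ c + 1) - Real.sqrt (Γ c))) L
        (nhds (Real.exp (θ * st) * (η / (2 * θ)) * (-1))) := by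
      exact (tendsto_const_nhds.mul (hsq.div_const (2*θ))).mul
        (by simpa using (hΓ1.neg).sub hΓs)
    have h' := h.congr (fun c => (hA22 c).symm)
    convert h' using 2
    ring
end

section
/- As c → +∞: x̄₂(c) → +∞, x̄₁(c) → −∞, x₁*(c) → +∞, x₂*(c) → −∞, A₂₁(c) → 0, and A₂₂(c) → 0. -/
open Real Filter Set

private lemma aux_mul_le {E u v r d S : ℝ} (hE : 0 ≤ E) (hr : 0 ≤ r) (hd : 0 ≤ d)
    (hdS : d ≤ S) (huv : u ≤ v) (hv0 : 0 ≤ v) :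
    E * u * r * d ≤ E * v * r * S := by
  have h1 : E * u * r * d ≤ E * v * r * d :=
    mul_le_mul_of_nonneg_right
      (mul_le_mul_of_nonneg_right (mul_le_mul_of_nonneg_left huv hE) hr) hd
  have h2 : E * v * r * d ≤ E * v * r * S :=
    mul_le_mul_of_nonneg_left hdS (mul_nonneg (mul_nonneg hE hv0) hr)
  linarith

set_option maxHeartbeats 2000000 in
/-- Limits as c → +∞ of the explicit Nash-equilibrium parameters. -/
theorem stmt_14
    (ρ σ lam lamt ct s1 s2 : ℝ) (hρ : 0 < ρ) (hσ : 0 < σ)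
    (h1 : 0 < 1 - lam * ρ) (h2 : lamt ≤ lam) (h3 : 0 ≤ lamt)
    (h5 : 0 ≤ ct) (h8 : s1 < s2)
    (θ η st : ℝ) (hθ : θ = Real.sqrt (2 * ρ / σ ^ 2))
    (hη : η = (1 - lam * ρ) / ρ) (hst : st = (s1 + s2) / 2)
    (ξ : ℝ → ℝ)
    (hξ : ∀ c : ℝ, 0 < c → ξ c ∈ Set.Ioo 0 η ∧
      2 * ξ c + θ * c - η * Real.log ((η + ξ c) / (η - ξ c)) = 0)
    (Γ : ℝ → ℝ)
    (hΓ : ∀ c : ℝ, Γ c = θ * (c - ct) / (4 * ξ c)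
      + θ * c * (lam - lamt) / (4 * η * ξ c) + (lam - lamt) / (2 * η))
    (xb1 xb2 xs1 xs2 : ℝ → ℝ)
    (hxb1 : ∀ c : ℝ, xb1 c = st - (1 / θ) * Real.log
      (Real.sqrt ((η + ξ c) / (η - ξ c)) * (Real.sqrt (Γ c + 1) + Real.sqrt (Γ c))))
    (hxb2 : ∀ c : ℝ, xb2 c = st + (1 / θ) * Real.log
      (Real.sqrt ((η + ξ c) / (η - ξ c)) * (Real.sqrt (Γ c + 1) + Real.sqrt (Γ c))))
    (hxs1 : ∀ c : ℝ, xs1 c = st - (1 / θ) * Real.log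
      (Real.sqrt ((η - ξ c) / (η + ξ c)) * (Real.sqrt (Γ c + 1) + Real.sqrt (Γ c))))
    (hxs2 : ∀ c : ℝ, xs2 c = st + (1 / θ) * Real.log
      (Real.sqrt ((η - ξ c) / (η + ξ c)) * (Real.sqrt (Γ c + 1) + Real.sqrt (Γ c))))
    (A21 A22 : ℝ → ℝ)
    (hA21 : ∀ c : ℝ, A21 c = Real.exp (-(θ * st))
      * (Real.sqrt (η ^ 2 - (ξ c) ^ 2) / (2 * θ))
      * (Real.sqrt (Γ c + 1) - Real.sqrt (Γ c)))
    (hA22 : ∀ c : ℝ, A22 c = Real.exp (θ * st)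
      * (Real.sqrt (η ^ 2 - (ξ c) ^ 2) / (2 * θ))
      * (-Real.sqrt (Γ c + 1) - Real.sqrt (Γ c)))
    :
    Filter.Tendsto xb2 Filter.atTop Filter.atTop ∧
    Filter.Tendsto xb1 Filter.atTop Filter.atBot ∧
    Filter.Tendsto xs1 Filter.atTop Filter.atTop ∧
    Filter.Tendsto xs2 Filter.atTop Filter.atBot ∧
    Filter.Tendsto A21 Filter.atTop (nhds 0) ∧
    Filter.Tendsto A22 Filter.atTop (nhds 0)     := by
  have hθp : 0 < θ := by
    rw [hθ]; exact Real.sqrt_pos.mpr (by positivity)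
  have hηp : 0 < η := by rw [hη]; exact div_pos h1 hρ
  have hll : 0 ≤ lam - lamt := by linarith
  set k : ℝ := θ / (2 * η) with hk
  have hkp : 0 < k := by rw [hk]; positivity
  set a : ℝ := θ / (2 * η) + θ * (lam - lamt) / (2 * η ^ 2) with ha
  set b : ℝ := (lam - lamt) / (2 * η) with hb
  have hap : 0 < a := by
    have h1' : (0:ℝ) ≤ θ * (lam - lamt) / (2 * η ^ 2) := by positivity
    have h2' : (0:ℝ) < θ / (2 * η) := by positivity
    rw [ha]; linarith
  have hbnn : 0 ≤ b := by rw [hb]; positivity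
  set P : ℝ → ℝ := fun c => Real.sqrt ((η + ξ c) / (η - ξ c))
      * (Real.sqrt (Γ c + 1) + Real.sqrt (Γ c)) with hPdef
  set Q : ℝ → ℝ := fun c => Real.sqrt ((η - ξ c) / (η + ξ c))
      * (Real.sqrt (Γ c + 1) + Real.sqrt (Γ c)) with hQdef
  -- master eventual fact
  have hev : ∀ᶠ c in atTop, 0 < ξ c ∧ ξ c < η ∧ η / 2 ≤ ξ c ∧
      θ * (c - ct) / (4 * η) ≤ Γ c ∧ Γ c ≤ a * c + b ∧
      Real.sqrt ((η - ξ c) / (η + ξ c)) ≤ Real.exp (-(k * c)) := by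
    filter_upwards [eventually_ge_atTop (1:ℝ), eventually_ge_atTop ct,
      eventually_ge_atTop (η * Real.log 4 / θ)] with c hc1 hcct hclog
    have hcpos : 0 < c := lt_of_lt_of_le one_pos hc1
    obtain ⟨⟨hx0, hxη⟩, heq⟩ := hξ c hcpos
    set x := ξ c with hxdef
    have hηx : 0 < η - x := by linarith
    have hηx2 : 0 < η + x := by linarith
    have hlogeq : Real.log ((η + x) / (η - x)) = (2 * x + θ * c) / η := by
      field_simp
      linarith
    have hratio : (η - x) / (η + x) = Real.exp (-((2 * x + θ * c) / η)) := by
      rw [← hlogeq, Real.exp_neg, Real.exp_log (by positivity), inv_div]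
    -- exponential smallness of η - x
    have hexple : Real.exp (-((2 * x + θ * c) / η)) ≤ Real.exp (-(θ * c / η)) := by
      apply Real.exp_le_exp.mpr
      have : θ * c / η ≤ (2 * x + θ * c) / η := by
        rw [div_le_div_iff₀ hηp hηp]
        nlinarith
      linarith
    have hexp14 : Real.exp (-(θ * c / η)) ≤ 1 / 4 := by
      have h4 : Real.log 4 ≤ θ * c / η := by
        rw [div_le_iff₀ hθp] at hclog
        rw [le_div_iff₀ hηp]
        nlinarith
      calc Real.exp (-(θ * c / η)) ≤ Real.exp (-(Real.log 4)) :=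
            Real.exp_le_exp.mpr (by linarith)
        _ = 1 / 4 := by
            rw [Real.exp_neg, Real.exp_log (by norm_num)]; norm_num
    have hsub : η - x = (η + x) * Real.exp (-((2 * x + θ * c) / η)) := by
      rw [← hratio]; field_simp
    have hxhalf : η / 2 ≤ x := by
      have h1' : η - x ≤ (η + x) * (1 / 4) := by
        rw [hsub]
        exact mul_le_mul_of_nonneg_left (hexple.trans hexp14) (le_of_lt hηx2)
      nlinarith
    -- Γ lower bound
    have hΓlow : θ * (c - ct) / (4 * η) ≤ Γ c := by
      rw [hΓ c]
      have ht1 : θ * (c - ct) / (4 * η) ≤ θ * (c - ct) / (4 * x) := by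
        rw [div_le_div_iff₀ (by positivity) (by positivity)]
        have hcc : 0 ≤ c - ct := by linarith
        nlinarith [mul_nonneg hθp.le hcc]
      have ht2 : 0 ≤ θ * c * (lam - lamt) / (4 * η * x) := by positivity
      have ht3 : 0 ≤ (lam - lamt) / (2 * η) := by positivity
      linarith
    -- Γ upper bound
    have hΓup : Γ c ≤ a * c + b := by
      have hac : a * c = θ / (2 * η) * c + θ * (lam - lamt) / (2 * η ^ 2) * c := by
        rw [ha]; ring
      rw [hΓ c]
      have ht1 : θ * (c - ct) / (4 * x) ≤ θ / (2 * η) * c := by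
        rw [div_mul_eq_mul_div, div_le_div_iff₀ (by positivity) (by positivity)]
        nlinarith [mul_nonneg hθp.le hcpos.le, mul_nonneg hθp.le h5]
      have ht2 : θ * c * (lam - lamt) / (4 * η * x) ≤ θ * (lam - lamt) / (2 * η ^ 2) * c := by
        rw [div_mul_eq_mul_div, div_le_div_iff₀ (by positivity) (by positivity)]
        nlinarith [mul_nonneg (mul_nonneg (mul_nonneg (mul_nonneg hθp.le hll) hcpos.le) hηp.le)
          (show (0:ℝ) ≤ 2 * x - η by linarith)]
      linarith [hac]
    -- sqrt ratio bound
    have hsqrtQ : Real.sqrt ((η - x) / (η + x)) ≤ Real.exp (-(k * c)) := by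
      rw [hratio]
      have hsq : Real.sqrt (Real.exp (-((2 * x + θ * c) / η)))
          = Real.exp (-((2 * x + θ * c) / η) / 2) := by
        rw [show Real.exp (-((2 * x + θ * c) / η))
            = (Real.exp (-((2 * x + θ * c) / η) / 2)) ^ 2 by
          rw [sq, ← Real.exp_add]
          congr 1
          ring]
        exact Real.sqrt_sq (Real.exp_nonneg _)
      rw [hsq]
      apply Real.exp_le_exp.mpr
      rw [hk]
      have hgoal : θ / (2 * η) * c ≤ (2 * x + θ * c) / η / 2 := by
        rw [div_mul_eq_mul_div, div_div, div_le_div_iff₀ (by positivity) (by positivity)]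
        nlinarith
      linarith
    exact ⟨hx0, hxη, hxhalf, hΓlow, hΓup, hsqrtQ⟩
  -- Γ → ∞
  have hΓtop : Tendsto Γ atTop atTop := by
    apply tendsto_atTop_mono' atTop (hev.mono fun c h => h.2.2.2.1)
    apply Tendsto.atTop_div_const (by positivity)
    exact (tendsto_atTop_add_const_right atTop (-ct) tendsto_id).const_mul_atTop hθp
  have hsqrtΓ : Tendsto (fun c => Real.sqrt (Γ c)) atTop atTop := by
    rw [tendsto_atTop]
    intro M
    filter_upwards [hΓtop.eventually_ge_atTop (M ^ 2)] with c hc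
    calc M ≤ |M| := le_abs_self M
      _ = Real.sqrt (M ^ 2) := (Real.sqrt_sq_eq_abs M).symm
      _ ≤ Real.sqrt (Γ c) := Real.sqrt_le_sqrt hc
  -- P → ∞
  have hPtop : Tendsto P atTop atTop := by
    apply tendsto_atTop_mono' atTop ?_ hsqrtΓ
    filter_upwards [hev] with c h
    obtain ⟨hx0, hxη, -, -, -, -⟩ := h
    have h1' : (1:ℝ) ≤ Real.sqrt ((η + ξ c) / (η - ξ c)) := by
      rw [Real.one_le_sqrt]
      rw [le_div_iff₀ (by linarith)]
      linarith
    have h2' : (0:ℝ) ≤ Real.sqrt (Γ c + 1) := Real.sqrt_nonneg _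
    have h3' : (0:ℝ) ≤ Real.sqrt (Γ c) := Real.sqrt_nonneg _
    simp only [hPdef]
    nlinarith
  have hlogP : Tendsto (fun c => Real.log (P c)) atTop atTop :=
    Real.tendsto_log_atTop.comp hPtop
  -- conclusion for xb2, xb1
  have hxb2top : Tendsto xb2 atTop atTop := by
    have hfe : xb2 = fun c => st + 1 / θ * Real.log (P c) := funext fun c => hxb2 c
    rw [hfe]
    exact tendsto_atTop_add_const_left _ st (hlogP.const_mul_atTop (by positivity))
  have hxb1bot : Tendsto xb1 atTop atBot := by
    have hfe : xb1 = fun c => st + -(1 / θ * Real.log (P c)) := by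
      funext c; rw [hxb1 c]; ring
    rw [hfe]
    apply tendsto_atBot_add_const_left
    exact tendsto_neg_atTop_atBot.comp (hlogP.const_mul_atTop (by positivity))
  -- Q → 0
  have hexp0 : Tendsto (fun c => Real.exp (-(k * c))) atTop (nhds 0) := by
    apply Real.tendsto_exp_atBot.comp
    exact tendsto_neg_atTop_atBot.comp (tendsto_id.const_mul_atTop hkp)
  have hxe0 : Tendsto (fun c => k * c * Real.exp (-(k * c))) atTop (nhds 0) := by
    have h1' := (Real.tendsto_pow_mul_exp_neg_atTop_nhds_zero 1).comp
      (tendsto_id.const_mul_atTop hkp (l := atTop))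
    simpa [Function.comp_def] using h1'
  have hg0 : Tendsto (fun c => 2 * (a * c + b + 1) * Real.exp (-(k * c))) atTop (nhds 0) := by
    have heq2 : (fun c => 2 * (a * c + b + 1) * Real.exp (-(k * c)))
        = fun c => 2 * a / k * (k * c * Real.exp (-(k * c)))
          + 2 * (b + 1) * Real.exp (-(k * c)) := by
      funext c; field_simp; ring
    rw [heq2]
    have h := (hxe0.const_mul (2 * a / k)).add (hexp0.const_mul (2 * (b + 1)))
    simpa using h
  have hQbound : ∀ᶠ c in atTop, ‖Q c‖ ≤ 2 * (a * c + b + 1) * Real.exp (-(k * c)) := by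
    filter_upwards [hev, eventually_ge_atTop ct, eventually_ge_atTop (0:ℝ)] with c h hcct hc0
    obtain ⟨hx0, hxη, -, hΓlow, hΓup, hsq⟩ := h
    have hΓ0 : 0 ≤ Γ c :=
      le_trans (div_nonneg (mul_nonneg hθp.le (by linarith)) (by positivity)) hΓlow
    have hQnn : 0 ≤ Q c := by
      simp only [hQdef]
      positivity
    rw [Real.norm_eq_abs, abs_of_nonneg hQnn]
    have hsum : Real.sqrt (Γ c + 1) + Real.sqrt (Γ c) ≤ 2 * Real.sqrt (a * c + b + 1) := by
      have h1' : Real.sqrt (Γ c + 1) ≤ Real.sqrt (a * c + b + 1) :=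
        Real.sqrt_le_sqrt (by linarith)
      have h2' : Real.sqrt (Γ c) ≤ Real.sqrt (a * c + b + 1) :=
        Real.sqrt_le_sqrt (by linarith)
      linarith
    have habc1 : (1:ℝ) ≤ a * c + b + 1 := by nlinarith
    have hsle : Real.sqrt (a * c + b + 1) ≤ a * c + b + 1 := by
      have h' := Real.sqrt_le_sqrt (show a * c + b + 1 ≤ (a * c + b + 1) ^ 2 by
        nlinarith [mul_self_nonneg (a * c + b + 1 - 1), habc1])
      rwa [Real.sqrt_sq (by linarith)] at h' 
    calc Q c ≤ Real.exp (-(k * c)) * (2 * Real.sqrt (a * c + b + 1)) := by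
          simp only [hQdef]
          apply mul_le_mul hsq hsum (by positivity) (Real.exp_nonneg _)
      _ ≤ Real.exp (-(k * c)) * (2 * (a * c + b + 1)) := by
          apply mul_le_mul_of_nonneg_left (by linarith) (Real.exp_nonneg _)
      _ = 2 * (a * c + b + 1) * Real.exp (-(k * c)) := by ring
  have hQ0 : Tendsto Q atTop (nhds 0) := squeeze_zero_norm' hQbound hg0
  have hQpos : ∀ᶠ c in atTop, 0 < Q c := by
    filter_upwards [hev, eventually_ge_atTop ct] with c h hcct
    obtain ⟨hx0, hxη, -, hΓlow, -, -⟩ := h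
    have hΓ0 : 0 ≤ Γ c :=
      le_trans (div_nonneg (mul_nonneg hθp.le (by linarith)) (by positivity)) hΓlow
    simp only [hQdef]
    apply mul_pos
    · exact Real.sqrt_pos.mpr (div_pos (by linarith) (by linarith))
    · have hp : 0 < Real.sqrt (Γ c + 1) := Real.sqrt_pos.mpr (by linarith)
      linarith [Real.sqrt_nonneg (Γ c)]
  have hlogQ : Tendsto (fun c => Real.log (Q c)) atTop atBot := by
    have h := Real.tendsto_log_nhdsGT_zero.comp
      (tendsto_nhdsWithin_iff.mpr ⟨hQ0, hQpos.mono fun c hc => hc⟩)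
    exact h
  have hxs1top : Tendsto xs1 atTop atTop := by
    have hfe : xs1 = fun c => st + 1 / θ * -Real.log (Q c) := by
      funext c; rw [hxs1 c]; ring
    rw [hfe]
    apply tendsto_atTop_add_const_left
    apply Tendsto.const_mul_atTop (show (0:ℝ) < 1/θ by positivity)
    exact tendsto_neg_atBot_atTop.comp hlogQ
  have hxs2bot : Tendsto xs2 atTop atBot := by
    have hfe : xs2 = fun c => st + 1 / θ * Real.log (Q c) := funext fun c => hxs2 c
    rw [hfe]
    apply tendsto_atBot_add_const_left
    exact hlogQ.const_mul_atBot (by positivity)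
  -- the square-root identity
  have hsqid : ∀ᶠ c in atTop, Real.sqrt (η ^ 2 - ξ c ^ 2)
      = (η + ξ c) * Real.sqrt ((η - ξ c) / (η + ξ c)) := by
    filter_upwards [hev] with c h
    obtain ⟨hx0, hxη, -, -, -, -⟩ := h
    have hηx2 : 0 < η + ξ c := by linarith
    rw [show η ^ 2 - ξ c ^ 2 = (η + ξ c) ^ 2 * ((η - ξ c) / (η + ξ c)) by
      field_simp; ring]
    rw [Real.sqrt_mul (by positivity), Real.sqrt_sq (by positivity)]
  have hA21b : ∀ᶠ c in atTop, ‖A21 c‖ ≤ Real.exp (-(θ * st)) * η / θ * Q c := by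
    filter_upwards [hev, hsqid] with c h hid
    obtain ⟨hx0, hxη, -, -, -, -⟩ := h
    have hd0 : 0 ≤ Real.sqrt (Γ c + 1) - Real.sqrt (Γ c) := by
      have h' := Real.sqrt_le_sqrt (show Γ c ≤ Γ c + 1 by linarith)
      linarith
    have hA21nn : 0 ≤ A21 c := by
      rw [hA21 c]
      have hnn := Real.sqrt_nonneg (η ^ 2 - ξ c ^ 2)
      positivity
    rw [Real.norm_eq_abs, abs_of_nonneg hA21nn, hA21 c, hid]
    simp only [hQdef]
    rw [show Real.exp (-(θ * st)) * ((η + ξ c) * Real.sqrt ((η - ξ c) / (η + ξ c)) / (2 * θ))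
        * (Real.sqrt (Γ c + 1) - Real.sqrt (Γ c))
        = Real.exp (-(θ * st)) * (η + ξ c) * Real.sqrt ((η - ξ c) / (η + ξ c))
          * (Real.sqrt (Γ c + 1) - Real.sqrt (Γ c)) / (2 * θ) by ring]
    rw [show Real.exp (-(θ * st)) * η / θ
        * (Real.sqrt ((η - ξ c) / (η + ξ c)) * (Real.sqrt (Γ c + 1) + Real.sqrt (Γ c)))
        = Real.exp (-(θ * st)) * (2 * η) * Real.sqrt ((η - ξ c) / (η + ξ c))
          * (Real.sqrt (Γ c + 1) + Real.sqrt (Γ c)) / (2 * θ) by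
      field_simp]
    rw [div_le_div_iff₀ (by positivity) (by positivity)]
    apply mul_le_mul_of_nonneg_right ?_ (by positivity)
    apply aux_mul_le (Real.exp_nonneg _) (Real.sqrt_nonneg _) hd0
    · linarith [Real.sqrt_nonneg (Γ c)]
    · linarith
    · positivity
  have hA22b : ∀ᶠ c in atTop, ‖A22 c‖ ≤ Real.exp (θ * st) * η / θ * Q c := by
    filter_upwards [hev, hsqid] with c h hid
    obtain ⟨hx0, hxη, -, -, -, -⟩ := h
    have hA22eq : A22 c = -(Real.exp (θ * st) * (Real.sqrt (η ^ 2 - ξ c ^ 2) / (2 * θ))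
        * (Real.sqrt (Γ c + 1) + Real.sqrt (Γ c))) := by
      rw [hA22 c]; ring
    have hnn : 0 ≤ Real.exp (θ * st) * (Real.sqrt (η ^ 2 - ξ c ^ 2) / (2 * θ))
        * (Real.sqrt (Γ c + 1) + Real.sqrt (Γ c)) := by
      have hnn1 := Real.sqrt_nonneg (η ^ 2 - ξ c ^ 2)
      positivity
    rw [Real.norm_eq_abs, hA22eq, abs_neg, abs_of_nonneg hnn, hid]
    simp only [hQdef]
    rw [show Real.exp (θ * st) * ((η + ξ c) * Real.sqrt ((η - ξ c) / (η + ξ c)) / (2 * θ))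
        * (Real.sqrt (Γ c + 1) + Real.sqrt (Γ c))
        = Real.exp (θ * st) * (η + ξ c) * Real.sqrt ((η - ξ c) / (η + ξ c))
          * (Real.sqrt (Γ c + 1) + Real.sqrt (Γ c)) / (2 * θ) by ring]
    rw [show Real.exp (θ * st) * η / θ
        * (Real.sqrt ((η - ξ c) / (η + ξ c)) * (Real.sqrt (Γ c + 1) + Real.sqrt (Γ c)))
        = Real.exp (θ * st) * (2 * η) * Real.sqrt ((η - ξ c) / (η + ξ c))
          * (Real.sqrt (Γ c + 1) + Real.sqrt (Γ c)) / (2 * θ) by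
      field_simp]
    rw [div_le_div_iff₀ (by positivity) (by positivity)]
    apply mul_le_mul_of_nonneg_right ?_ (by positivity)
    apply aux_mul_le (Real.exp_nonneg _) (Real.sqrt_nonneg _) ?_ le_rfl
    · linarith
    · positivity
    · positivity
  have hA210 : Tendsto A21 atTop (nhds 0) := by
    apply squeeze_zero_norm' hA21b
    have h := hQ0.const_mul (Real.exp (-(θ * st)) * η / θ)
    simpa using h
  have hA220 : Tendsto A22 atTop (nhds 0) := by
    apply squeeze_zero_norm' hA22b
    have h := hQ0.const_mul (Real.exp (θ * st) * η / θ)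
    simpa using h
  exact ⟨hxb2top, hxb1bot, hxs1top, hxs2bot, hA210, hA220⟩
end

section
/- For each admissible c let Ṽ₂^c be the function built from the explicit solution with cost parameter c. Then for every x ∈ ℝ, lim_{c→+∞} Ṽ₂^c(x) = (s₂ − x)/ρ. -/
open Real Filter Set

set_option maxHeartbeats 1000000 in
/-- The candidate value function Ṽ₂ᶜ converges pointwise, as c → +∞,
to (s₂ − x)/ρ. -/
theorem stmt_15
    (ρ σ lam lamt ct s1 s2 : ℝ) (hρ : 0 < ρ) (hσ : 0 < σ)
    (h1 : 0 < 1 - lam * ρ) (h2 : lamt ≤ lam) (h3 : 0 ≤ lamt)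
    (h5 : 0 ≤ ct) (h8 : s1 < s2)
    (θ η st : ℝ) (hθ : θ = Real.sqrt (2 * ρ / σ ^ 2))
    (hη : η = (1 - lam * ρ) / ρ) (hst : st = (s1 + s2) / 2)
    (ξ : ℝ → ℝ)
    (hξ : ∀ c : ℝ, 0 < c → ξ c ∈ Set.Ioo 0 η ∧
      2 * ξ c + θ * c - η * Real.log ((η + ξ c) / (η - ξ c)) = 0)
    (Γ : ℝ → ℝ)
    (hΓ : ∀ c : ℝ, Γ c = θ * (c - ct) / (4 * ξ c)
      + θ * c * (lam - lamt) / (4 * η * ξ c) + (lam - lamt) / (2 * η))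
    (xb1 xb2 xs1 xs2 : ℝ → ℝ)
    (hxb1 : ∀ c : ℝ, xb1 c = st - (1 / θ) * Real.log
      (Real.sqrt ((η + ξ c) / (η - ξ c)) * (Real.sqrt (Γ c + 1) + Real.sqrt (Γ c))))
    (hxb2 : ∀ c : ℝ, xb2 c = st + (1 / θ) * Real.log
      (Real.sqrt ((η + ξ c) / (η - ξ c)) * (Real.sqrt (Γ c + 1) + Real.sqrt (Γ c))))
    (hxs1 : ∀ c : ℝ, xs1 c = st - (1 / θ) * Real.log
      (Real.sqrt ((η - ξ c) / (η + ξ c)) * (Real.sqrt (Γ c + 1) + Real.sqrt (Γ c))))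
    (hxs2 : ∀ c : ℝ, xs2 c = st + (1 / θ) * Real.log
      (Real.sqrt ((η - ξ c) / (η + ξ c)) * (Real.sqrt (Γ c + 1) + Real.sqrt (Γ c))))
    (A21 A22 : ℝ → ℝ)
    (hA21 : ∀ c : ℝ, A21 c = Real.exp (-(θ * st))
      * (Real.sqrt (η ^ 2 - (ξ c) ^ 2) / (2 * θ))
      * (Real.sqrt (Γ c + 1) - Real.sqrt (Γ c)))
    (hA22 : ∀ c : ℝ, A22 c = Real.exp (θ * st)
      * (Real.sqrt (η ^ 2 - (ξ c) ^ 2) / (2 * θ))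
      * (-Real.sqrt (Γ c + 1) - Real.sqrt (Γ c)))
    (φ2 : ℝ → ℝ → ℝ)
    (hφ2 : ∀ c x : ℝ, φ2 c x = A21 c * Real.exp (θ * x)
      + A22 c * Real.exp (-(θ * x)) + (s2 - x) / ρ)
    (V2 : ℝ → ℝ → ℝ)
    (hV2 : ∀ c x : ℝ, V2 c x =
      if x ≤ xb1 c then φ2 c (xs1 c) + ct + lamt * (xs1 c - x)
      else if x < xb2 c then φ2 c x
      else φ2 c (xs2 c) - c - lam * (x - xs2 c))
    :
    ∀ x : ℝ, Filter.Tendsto (fun c => V2 c x) Filter.atTop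
      (nhds ((s2 - x) / ρ)) := by
  intro x
  have hθpos : 0 < θ := by rw [hθ]; exact Real.sqrt_pos.mpr (by positivity)
  have hηpos : 0 < η := by rw [hη]; exact div_pos h1 hρ
  have hll : (0:ℝ) ≤ lam - lamt := by linarith
  -- basic facts for c > 0
  have hfacts : ∀ c : ℝ, 0 < c →
      0 < ξ c ∧ ξ c < η ∧ (η + ξ c) / (η - ξ c) = Real.exp ((2 * ξ c + θ * c) / η) := by
    intro c hc
    obtain ⟨⟨h01, h02⟩, heq⟩ := hξ c hc
    refine ⟨h01, h02, ?_⟩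
    have hpos : 0 < (η + ξ c) / (η - ξ c) := div_pos (by linarith) (by linarith)
    have hlg : Real.log ((η + ξ c) / (η - ξ c)) = (2 * ξ c + θ * c) / η := by
      field_simp
      linarith
    rw [← hlg, Real.exp_log hpos]
  -- upper bound on η - ξ c
  have hub : ∀ c : ℝ, 0 < c → η - ξ c ≤ 2 * η * Real.exp (-(θ * c / η)) := by
    intro c hc
    obtain ⟨h01, h02, hr⟩ := hfacts c hc
    have h1' : 0 < η - ξ c := by linarith
    rw [div_eq_iff h1'.ne'] at hr
    have h3' : η - ξ c = (η + ξ c) * Real.exp (-((2 * ξ c + θ * c) / η)) := by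
      rw [Real.exp_neg]
      field_simp [Real.exp_ne_zero]
      rw [show ξ c * 2 = 2 * ξ c by ring]
      linarith [hr]
    rw [h3']
    have he : Real.exp (-((2 * ξ c + θ * c) / η)) ≤ Real.exp (-(θ * c / η)) := by
      apply Real.exp_le_exp.mpr
      have : θ * c / η ≤ (2 * ξ c + θ * c) / η := by gcongr; linarith
      linarith
    have := Real.exp_pos (-((2 * ξ c + θ * c) / η))
    nlinarith [Real.exp_pos (-(θ * c / η))]
  -- exp decay
  have hexp0 : Tendsto (fun c : ℝ => Real.exp (-(θ * c / η))) atTop (nhds 0) := by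
    apply Real.tendsto_exp_atBot.comp
    apply tendsto_neg_atBot_iff.mpr
    apply Tendsto.atTop_div_const hηpos
    exact Tendsto.const_mul_atTop hθpos tendsto_id
  -- ξ tends to η
  have hξtend : Tendsto ξ atTop (nhds η) := by
    have hlow : Tendsto (fun c : ℝ => η - 2 * η * Real.exp (-(θ * c / η))) atTop (nhds η) := by
      have h := hexp0.const_mul (2 * η)
      have h2 := (tendsto_const_nhds : Tendsto (fun _ : ℝ => η) atTop (nhds η)).sub h
      simpa using h2
    apply tendsto_of_tendsto_of_tendsto_of_le_of_le' hlow tendsto_const_nhds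
    · filter_upwards [eventually_gt_atTop (0:ℝ)] with c hc; linarith [hub c hc]
    · filter_upwards [eventually_gt_atTop (0:ℝ)] with c hc; exact (hfacts c hc).2.1.le
  have hξhalf : ∀ᶠ c in atTop, η / 2 < ξ c :=
    hξtend.eventually_const_lt (by linarith)
  -- Γ bounds
  set K : ℝ := θ / η + θ * (lam - lamt) / (η * η) + (lam - lamt) / (2 * η) with hKdef
  have hK0 : 0 ≤ K := by
    apply add_nonneg (add_nonneg _ _) _ <;> positivity
  have hΓev : ∀ᶠ c in atTop, 0 ≤ Γ c ∧ Γ c ≤ K * c := by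
    filter_upwards [hξhalf, eventually_ge_atTop (max 1 ct)] with c hchalf hcm
    have hc1 : (1:ℝ) ≤ c := le_trans (le_max_left _ _) hcm
    have hcct : ct ≤ c := le_trans (le_max_right _ _) hcm
    have hcpos : (0:ℝ) < c := by linarith
    have hxpos : 0 < ξ c := lt_trans (by positivity) hchalf
    constructor
    · rw [hΓ]
      apply add_nonneg (add_nonneg _ _) _
      · apply div_nonneg (mul_nonneg hθpos.le (by linarith)) (by positivity)
      · apply div_nonneg (mul_nonneg (mul_nonneg hθpos.le hcpos.le) hll) (by positivity)
      · positivity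
    · rw [hΓ]
      have e1 : θ * (c - ct) / (4 * ξ c) ≤ θ * c / η := by
        rw [div_le_div_iff₀ (by positivity) hηpos]
        nlinarith [mul_le_mul_of_nonneg_left hchalf.le (mul_nonneg hθpos.le hcpos.le),
          mul_nonneg (mul_nonneg hθpos.le hηpos.le) h5,
          mul_nonneg (mul_nonneg hθpos.le hcpos.le) hηpos.le]
      have e2 : θ * c * (lam - lamt) / (4 * η * ξ c) ≤ θ * c * (lam - lamt) / (η * η) := by
        apply div_le_div_of_nonneg_left (mul_nonneg (mul_nonneg hθpos.le hcpos.le) hll)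
          (by positivity)
        nlinarith [mul_le_mul_of_nonneg_left hchalf.le hηpos.le]
      have e3 : (lam - lamt) / (2 * η) ≤ (lam - lamt) / (2 * η) * c :=
        le_mul_of_one_le_right (by positivity) hc1
      have hKc : K * c = θ * c / η + θ * c * (lam - lamt) / (η * η)
          + (lam - lamt) / (2 * η) * c := by rw [hKdef]; ring
      rw [hKc]
      have e2' : θ * c * (lam - lamt) / (η * η) ≤ θ * c * (lam - lamt) / (η * η) := le_refl _
      linarith
  -- sqrt(η² - ξ²) bound
  have hsq : ∀ c : ℝ, 0 < c →
      Real.sqrt (η ^ 2 - (ξ c) ^ 2) ≤ 2 * η * Real.exp (-(θ * c / (2 * η))) := by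
    intro c hc
    obtain ⟨h01, h02, _⟩ := hfacts c hc
    have hexp2 : Real.exp (-(θ * c / (2 * η))) ^ 2 = Real.exp (-(θ * c / η)) := by
      rw [sq, ← Real.exp_add]
      congr 1
      field_simp
      ring
    have h4 : η ^ 2 - (ξ c) ^ 2 ≤ (2 * η * Real.exp (-(θ * c / (2 * η)))) ^ 2 := by
      have hub' := hub c hc
      have h5' : (η + ξ c) * (η - ξ c) ≤ 2 * η * (η - ξ c) :=
        mul_le_mul_of_nonneg_right (by linarith) (by linarith)
      have h6' : 2 * η * (η - ξ c) ≤ 2 * η * (2 * η * Real.exp (-(θ * c / η))) :=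
        mul_le_mul_of_nonneg_left hub' (by positivity)
      have hrw : (2 * η * Real.exp (-(θ * c / (2 * η)))) ^ 2
          = 2 * η * (2 * η * Real.exp (-(θ * c / η))) := by
        rw [mul_pow, mul_pow, hexp2]; ring
      rw [hrw]
      nlinarith
    calc Real.sqrt (η ^ 2 - (ξ c) ^ 2)
        ≤ Real.sqrt ((2 * η * Real.exp (-(θ * c / (2 * η)))) ^ 2) := Real.sqrt_le_sqrt h4
      _ = 2 * η * Real.exp (-(θ * c / (2 * η))) := Real.sqrt_sq (by positivity)
  -- the dominating function
  set g : ℝ → ℝ := fun c => Real.exp (θ * |st|)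
    * (2 * η * Real.exp (-(θ * c / (2 * η))) / (2 * θ)) * (2 * Real.sqrt (K * c + 1))
    with hgdef
  have hAbd : ∀ᶠ c in atTop, |A21 c| ≤ g c ∧ |A22 c| ≤ g c := by
    filter_upwards [hΓev, eventually_gt_atTop (0:ℝ)] with c hΓc hc
    obtain ⟨hΓ0, hΓK⟩ := hΓc
    have hsqc := hsq c hc
    have hsΓ1 : Real.sqrt (Γ c + 1) ≤ Real.sqrt (K * c + 1) :=
      Real.sqrt_le_sqrt (by linarith)
    have hsΓ : Real.sqrt (Γ c) ≤ Real.sqrt (K * c + 1) :=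
      Real.sqrt_le_sqrt (by linarith)
    have hsub : Real.sqrt (Γ c) ≤ Real.sqrt (Γ c + 1) :=
      Real.sqrt_le_sqrt (by linarith)
    have hst1 : Real.exp (-(θ * st)) ≤ Real.exp (θ * |st|) := by
      apply Real.exp_le_exp.mpr
      have h := mul_le_mul_of_nonneg_left (neg_abs_le st) hθpos.le
      linarith
    have hst2 : Real.exp (θ * st) ≤ Real.exp (θ * |st|) := by
      apply Real.exp_le_exp.mpr
      have h := mul_le_mul_of_nonneg_left (le_abs_self st) hθpos.le
      linarith
    have hm : Real.sqrt (η ^ 2 - (ξ c) ^ 2) / (2 * θ)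
        ≤ 2 * η * Real.exp (-(θ * c / (2 * η))) / (2 * θ) :=
      div_le_div_of_nonneg_right hsqc (by positivity) |>.trans_eq rfl
    have hmnn : 0 ≤ Real.sqrt (η ^ 2 - (ξ c) ^ 2) / (2 * θ) := by positivity
    have hmul3 : ∀ a a' b b' d d' : ℝ, 0 ≤ a → a ≤ a' → 0 ≤ b → b ≤ b' → 0 ≤ d → d ≤ d' →
        a * b * d ≤ a' * b' * d' := by
      intro a a' b b' d d' ha ha' hb hb' hd hd'
      exact mul_le_mul (mul_le_mul ha' hb' hb (ha.trans ha')) hd' hd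
        (mul_nonneg (ha.trans ha') (hb.trans hb'))
    constructor
    · have hA21nn : 0 ≤ A21 c := by
        rw [hA21]
        apply mul_nonneg (mul_nonneg (Real.exp_pos _).le hmnn) (by linarith)
      rw [abs_of_nonneg hA21nn, hA21, hgdef]
      apply hmul3 _ _ _ _ _ _ (Real.exp_pos _).le hst1 hmnn hm (by linarith)
      have : (0:ℝ) ≤ Real.sqrt (K * c + 1) := Real.sqrt_nonneg _
      linarith [Real.sqrt_nonneg (Γ c)]
    · have hA22np : A22 c ≤ 0 := by
        rw [hA22]
        apply mul_nonpos_iff.mpr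
        left
        constructor
        · exact mul_nonneg (Real.exp_pos _).le hmnn
        · linarith [Real.sqrt_nonneg (Γ c), Real.sqrt_nonneg (Γ c + 1)]
      have habs : |A22 c| = Real.exp (θ * st)
          * (Real.sqrt (η ^ 2 - (ξ c) ^ 2) / (2 * θ))
          * (Real.sqrt (Γ c + 1) + Real.sqrt (Γ c)) := by
        rw [abs_of_nonpos hA22np, hA22]; ring
      rw [habs, hgdef]
      apply hmul3 _ _ _ _ _ _ (Real.exp_pos _).le hst2 hmnn hm
        (by positivity) (by linarith)
  -- g tends to 0
  have hgtend : Tendsto g atTop (nhds 0) := by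
    have hapos : 0 < θ / (2 * η) := by positivity
    have hcomp : Tendsto (fun c : ℝ => (θ / (2 * η) * c) * Real.exp (-(θ / (2 * η) * c)))
        atTop (nhds 0) := by
      have h := Real.tendsto_pow_mul_exp_neg_atTop_nhds_zero 1
      have hac : Tendsto (fun c : ℝ => θ / (2 * η) * c) atTop atTop :=
        Tendsto.const_mul_atTop hapos tendsto_id
      have := h.comp hac
      simpa [Function.comp_def] using this
    have hcore : Tendsto (fun c : ℝ => Real.exp (-(θ * c / (2 * η))) * Real.sqrt (K * c + 1))
        atTop (nhds 0) := by
      apply squeeze_zero' (g := fun c => (Real.sqrt (K + 1) / (θ / (2 * η)))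
        * ((θ / (2 * η) * c) * Real.exp (-(θ / (2 * η) * c))))
      · filter_upwards with c; positivity
      · filter_upwards [eventually_ge_atTop (1:ℝ)] with c hc1
        have hcpos : (0:ℝ) < c := by linarith
        have hs : Real.sqrt (K * c + 1) ≤ Real.sqrt (K + 1) * c := by
          have hcc : c ≤ c ^ 2 := by nlinarith
          have hcc1 : (1:ℝ) ≤ c ^ 2 := by nlinarith
          have h1' : K * c + 1 ≤ (K + 1) * c ^ 2 := by
            nlinarith [mul_le_mul_of_nonneg_left hcc hK0]
          calc Real.sqrt (K * c + 1) ≤ Real.sqrt ((K + 1) * c ^ 2) := Real.sqrt_le_sqrt h1'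
            _ = Real.sqrt (K + 1) * c := by
                rw [Real.sqrt_mul (by linarith), Real.sqrt_sq hcpos.le]
        have heq : (Real.sqrt (K + 1) / (θ / (2 * η)))
            * ((θ / (2 * η) * c) * Real.exp (-(θ / (2 * η) * c)))
            = Real.sqrt (K + 1) * c * Real.exp (-(θ * c / (2 * η))) := by
          have : θ / (2 * η) * c = θ * c / (2 * η) := by ring
          rw [this]
          field_simp
        rw [heq]
        calc Real.exp (-(θ * c / (2 * η))) * Real.sqrt (K * c + 1)
            ≤ Real.exp (-(θ * c / (2 * η))) * (Real.sqrt (K + 1) * c) := by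
              apply mul_le_mul_of_nonneg_left hs (Real.exp_pos _).le
          _ = Real.sqrt (K + 1) * c * Real.exp (-(θ * c / (2 * η))) := by ring
      · simpa using hcomp.const_mul (Real.sqrt (K + 1) / (θ / (2 * η)))
    have heqg : g = fun c => (Real.exp (θ * |st|) * (2 * η) / (2 * θ) * 2)
        * (Real.exp (-(θ * c / (2 * η))) * Real.sqrt (K * c + 1)) := by
      funext c; rw [hgdef]; ring
    rw [heqg]
    simpa using hcore.const_mul (Real.exp (θ * |st|) * (2 * η) / (2 * θ) * 2)
  have hA21tend : Tendsto A21 atTop (nhds 0) := by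
    apply squeeze_zero_norm' _ hgtend
    filter_upwards [hAbd] with c hc
    simpa [Real.norm_eq_abs] using hc.1
  have hA22tend : Tendsto A22 atTop (nhds 0) := by
    apply squeeze_zero_norm' _ hgtend
    filter_upwards [hAbd] with c hc
    simpa [Real.norm_eq_abs] using hc.2
  -- φ2 tends to the limit
  have hφtend : Tendsto (fun c => φ2 c x) atTop (nhds ((s2 - x) / ρ)) := by
    have h := ((hA21tend.mul_const (Real.exp (θ * x))).add
      (hA22tend.mul_const (Real.exp (-(θ * x))))).add_const ((s2 - x) / ρ)
    simp only [zero_mul, add_zero, zero_add] at h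
    exact h.congr fun c => (hφ2 c x).symm
  -- eventually V2 c x = φ2 c x
  apply Tendsto.congr' _ hφtend
  filter_upwards [hΓev, eventually_gt_atTop (0:ℝ),
    eventually_ge_atTop (2 * η * (|x - st| + 1))] with c hΓc hc hclarge
  obtain ⟨hΓ0, _⟩ := hΓc
  obtain ⟨h01, h02, hr⟩ := hfacts c hc
  set M : ℝ := Real.sqrt ((η + ξ c) / (η - ξ c)) * (Real.sqrt (Γ c + 1) + Real.sqrt (Γ c))
    with hMdef
  have hS1 : 1 ≤ Real.sqrt (Γ c + 1) + Real.sqrt (Γ c) := by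
    have := Real.one_le_sqrt.mpr (show (1:ℝ) ≤ Γ c + 1 by linarith)
    linarith [Real.sqrt_nonneg (Γ c)]
  have hsqrtR : Real.sqrt ((η + ξ c) / (η - ξ c)) = Real.exp ((2 * ξ c + θ * c) / η / 2) := by
    rw [hr, ← Real.exp_half]
  have hMge : Real.exp (θ * c / (2 * η)) ≤ M := by
    rw [hMdef, hsqrtR]
    calc Real.exp (θ * c / (2 * η)) ≤ Real.exp ((2 * ξ c + θ * c) / η / 2) := by
          apply Real.exp_le_exp.mpr
          rw [div_div, div_le_div_iff₀ (by positivity) (by positivity)]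
          nlinarith [mul_pos h01 hηpos]
      _ = Real.exp ((2 * ξ c + θ * c) / η / 2) * 1 := by ring
      _ ≤ _ := by
          apply mul_le_mul_of_nonneg_left hS1 (Real.exp_pos _).le
  have hMpos : 0 < M := lt_of_lt_of_le (Real.exp_pos _) hMge
  have hlogM : θ * c / (2 * η) ≤ Real.log M := (Real.le_log_iff_exp_le hMpos).mpr hMge
  have hkey : c / (2 * η) ≤ (1 / θ) * Real.log M := by
    have := mul_le_mul_of_nonneg_left hlogM (show (0:ℝ) ≤ 1 / θ by positivity)
    have heq : (1 / θ) * (θ * c / (2 * η)) = c / (2 * η) := by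
      field_simp
    linarith [heq ▸ this]
  have hcd : |x - st| + 1 ≤ c / (2 * η) := by
    rw [le_div_iff₀ (by positivity)]
    linarith
  have hxb2' : x < xb2 c := by
    rw [hxb2]
    have : x - st ≤ |x - st| := le_abs_self _
    linarith
  have hxb1' : ¬ x ≤ xb1 c := by
    rw [hxb1]
    push_neg
    have h9 : st - x ≤ |x - st| := by rw [abs_sub_comm]; exact le_abs_self _
    linarith
  rw [hV2, if_neg hxb1', if_pos hxb2']
end

section
/- The function c ↦ x̄₂(c) is strictly increasing on (c̃, ∞), and the function c ↦ x̄₁(c) is strictly decreasing on (c̃, ∞). -/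
open Real Filter Set


noncomputable def hfun (η : ℝ) : ℝ → ℝ :=
  fun x => η * (Real.log (η + x) - Real.log (η - x)) - 2 * x

lemma hfun_hasDeriv {η x : ℝ} (h1 : 0 < η + x) (h2 : 0 < η - x) :
    HasDerivAt (hfun η) (2 * x ^ 2 / (η ^ 2 - x ^ 2)) x := by
  have d1 : HasDerivAt (fun y : ℝ => Real.log (η + y)) (1 / (η + x)) x := by
    simpa using (((hasDerivAt_id x).const_add η).log (ne_of_gt h1))
  have d2 : HasDerivAt (fun y : ℝ => Real.log (η - y)) ((-1) / (η - x)) x := by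
    simpa using (((hasDerivAt_id x).const_sub η).log (ne_of_gt h2))
  have : HasDerivAt (hfun η) (η * (1 / (η + x) - -1 / (η - x)) - 2 * 1) x := (((d1.sub d2).const_mul η).sub (((hasDerivAt_id x).const_mul 2)))
  convert this using 1
  have e0 : 0 < η ^ 2 - x ^ 2 := by nlinarith
  field_simp
  ring

lemma hfun_mono {η : ℝ} (hη : 0 < η) : StrictMonoOn (hfun η) (Set.Ioo 0 η) := by
  have hdiff : ∀ x ∈ Set.Ioo (0:ℝ) η, HasDerivAt (hfun η) (2 * x ^ 2 / (η ^ 2 - x ^ 2)) x := by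
    intro x hx
    exact hfun_hasDeriv (by linarith [hx.1]) (by linarith [hx.2])
  refine strictMonoOn_of_deriv_pos (convex_Ioo 0 η) ?_ ?_
  · intro x hx
    exact ((hdiff x hx).differentiableAt).continuousAt.continuousWithinAt
  · intro x hx
    rw [interior_Ioo] at hx
    rw [(hdiff x hx).deriv]
    have h0 : 0 < x := hx.1
    have h1 : 0 < η ^ 2 - x ^ 2 := by nlinarith [hx.2]
    positivity

lemma hfun_key {η x : ℝ} (hη : 0 < η) (hx : x ∈ Set.Ioo 0 η) :
    hfun η x < 2 * x ^ 3 / (η ^ 2 - x ^ 2) := by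
  obtain ⟨hx0, hxη⟩ := hx
  have h1 : 0 < η + x := by linarith
  have h2 : 0 < η - x := by linarith
  set t : ℝ := (η + x) / (η - x) with ht
  have hlt : 1 < t := by rw [ht, lt_div_iff₀ h2]; linarith
  have ht0 : 0 < t := by linarith
  have hlog : 0 < Real.log t := Real.log_pos hlt
  have hs : Real.log t < (t - t⁻¹) / 2 := by
    have := Real.self_lt_sinh_iff.mpr hlog
    rwa [Real.sinh_log ht0] at this
  have hld : Real.log (η + x) - Real.log (η - x) = Real.log t := by
    rw [ht, Real.log_div (ne_of_gt h1) (ne_of_gt h2)]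
  have he : 0 < η ^ 2 - x ^ 2 := by nlinarith
  have hval : η * ((t - t⁻¹) / 2) - 2 * x = 2 * x ^ 3 / (η ^ 2 - x ^ 2) := by
    rw [ht]
    field_simp
    ring
  have : η * Real.log t - 2 * x < η * ((t - t⁻¹) / 2) - 2 * x := by
    have := mul_lt_mul_of_pos_left hs hη
    linarith
  unfold hfun
  rw [hld]
  linarith [hval ▸ this]

noncomputable def Gfun (η k b d : ℝ) : ℝ → ℝ :=
  fun x => (k * hfun η x - b) / (4 * x) + d

lemma Gfun_mono {η k b d : ℝ} (hη : 0 < η) (hk : 1 ≤ k) (hb : 0 ≤ b) :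
    StrictMonoOn (Gfun η k b d) (Set.Ioo 0 η) := by
  have hdiff : ∀ x ∈ Set.Ioo (0:ℝ) η, HasDerivAt (Gfun η k b d)
      (((k * (2 * x ^ 2 / (η ^ 2 - x ^ 2))) * (4 * x) - (k * hfun η x - b) * 4) / (4 * x) ^ 2) x := by
    intro x hx
    have hx0 : (0:ℝ) < x := hx.1
    have hd1 := (hfun_hasDeriv (by linarith [hx.2] : (0:ℝ) < η + x) (by linarith [hx.2] : (0:ℝ) < η - x)).const_mul k
    have hd2 : HasDerivAt (fun y : ℝ => 4 * y) 4 x := by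
      simpa using (hasDerivAt_id x).const_mul (4:ℝ)
    exact ((hd1.sub_const b).div hd2 (by positivity)).add_const d
  refine strictMonoOn_of_deriv_pos (convex_Ioo 0 η) ?_ ?_
  · intro x hx
    exact ((hdiff x hx).differentiableAt).continuousAt.continuousWithinAt
  · intro x hx
    rw [interior_Ioo] at hx
    rw [(hdiff x hx).deriv]
    have hx0 : (0:ℝ) < x := hx.1
    have he : 0 < η ^ 2 - x ^ 2 := by nlinarith [hx.2]
    have hkey := hfun_key hη hx
    have hnum : 0 < (k * (2 * x ^ 2 / (η ^ 2 - x ^ 2))) * (4 * x) - (k * hfun η x - b) * 4 := by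
      have e1 : (k * (2 * x ^ 2 / (η ^ 2 - x ^ 2))) * (4 * x) = 4 * k * (2 * x ^ 3 / (η ^ 2 - x ^ 2)) := by
        field_simp
      have hk0 : (0:ℝ) < k := by linarith
      nlinarith [mul_lt_mul_of_pos_left hkey hk0]
    positivity

/-- c ↦ x̄₂(c) is strictly increasing and c ↦ x̄₁(c) strictly decreasing
on (c̃, ∞). -/
theorem stmt_16
    (ρ σ lam lamt ct s1 s2 : ℝ) (hρ : 0 < ρ) (hσ : 0 < σ)
    (h1 : 0 < 1 - lam * ρ) (h2 : lamt ≤ lam) (h3 : 0 ≤ lamt)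
    (h5 : 0 ≤ ct) (h8 : s1 < s2)
    (θ η st : ℝ) (hθ : θ = Real.sqrt (2 * ρ / σ ^ 2))
    (hη : η = (1 - lam * ρ) / ρ) (hst : st = (s1 + s2) / 2)
    (ξ : ℝ → ℝ)
    (hξ : ∀ c : ℝ, 0 < c → ξ c ∈ Set.Ioo 0 η ∧
      2 * ξ c + θ * c - η * Real.log ((η + ξ c) / (η - ξ c)) = 0)
    (Γ : ℝ → ℝ)
    (hΓ : ∀ c : ℝ, Γ c = θ * (c - ct) / (4 * ξ c)
      + θ * c * (lam - lamt) / (4 * η * ξ c) + (lam - lamt) / (2 * η))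
    (xb1 xb2 xs1 xs2 : ℝ → ℝ)
    (hxb1 : ∀ c : ℝ, xb1 c = st - (1 / θ) * Real.log
      (Real.sqrt ((η + ξ c) / (η - ξ c)) * (Real.sqrt (Γ c + 1) + Real.sqrt (Γ c))))
    (hxb2 : ∀ c : ℝ, xb2 c = st + (1 / θ) * Real.log
      (Real.sqrt ((η + ξ c) / (η - ξ c)) * (Real.sqrt (Γ c + 1) + Real.sqrt (Γ c))))
    (hxs1 : ∀ c : ℝ, xs1 c = st - (1 / θ) * Real.log
      (Real.sqrt ((η - ξ c) / (η + ξ c)) * (Real.sqrt (Γ c + 1) + Real.sqrt (Γ c))))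
    (hxs2 : ∀ c : ℝ, xs2 c = st + (1 / θ) * Real.log
      (Real.sqrt ((η - ξ c) / (η + ξ c)) * (Real.sqrt (Γ c + 1) + Real.sqrt (Γ c))))
    (A21 A22 : ℝ → ℝ)
    (hA21 : ∀ c : ℝ, A21 c = Real.exp (-(θ * st))
      * (Real.sqrt (η ^ 2 - (ξ c) ^ 2) / (2 * θ))
      * (Real.sqrt (Γ c + 1) - Real.sqrt (Γ c)))
    (hA22 : ∀ c : ℝ, A22 c = Real.exp (θ * st)
      * (Real.sqrt (η ^ 2 - (ξ c) ^ 2) / (2 * θ))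
      * (-Real.sqrt (Γ c + 1) - Real.sqrt (Γ c)))
    :
    StrictMonoOn xb2 (Set.Ioi ct) ∧ StrictAntiOn xb1 (Set.Ioi ct) := by
  have hθpos : 0 < θ := by
    rw [hθ]; exact Real.sqrt_pos.mpr (by positivity)
  have hηpos : 0 < η := by rw [hη]; exact div_pos h1 hρ
  have hE : 0 ≤ lam - lamt := by linarith
  set k : ℝ := 1 + (lam - lamt) / η with hkdef
  set b : ℝ := θ * ct with hbdef
  set d : ℝ := (lam - lamt) / (2 * η) with hddef
  have hk : 1 ≤ k := by
    have : 0 ≤ (lam - lamt) / η := div_nonneg hE hηpos.le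
    simp [hkdef]; linarith
  have hb : 0 ≤ b := mul_nonneg hθpos.le h5
  -- facts for each c > ct
  have hfacts : ∀ c ∈ Set.Ioi ct, ξ c ∈ Set.Ioo 0 η ∧ hfun η (ξ c) = θ * c ∧
      Γ c = Gfun η k b d (ξ c) ∧ 0 < Γ c := by
    intro c hc
    have hcgt : ct < c := hc
    have hc0 : 0 < c := lt_of_le_of_lt h5 hcgt
    obtain ⟨hmem, heq⟩ := hξ c hc0
    obtain ⟨hξ0, hξη⟩ := hmem
    have hp1 : 0 < η + ξ c := by linarith
    have hp2 : 0 < η - ξ c := by linarith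
    have hld : Real.log ((η + ξ c) / (η - ξ c))
        = Real.log (η + ξ c) - Real.log (η - ξ c) :=
      Real.log_div (ne_of_gt hp1) (ne_of_gt hp2)
    have hhval : hfun η (ξ c) = θ * c := by
      unfold hfun
      rw [← hld]; linarith
    refine ⟨⟨hξ0, hξη⟩, hhval, ?_, ?_⟩
    · rw [hΓ c]
      unfold Gfun
      rw [hhval, hkdef, hbdef, hddef]
      field_simp
      ring
    · rw [hΓ c]
      have t1 : 0 < θ * (c - ct) / (4 * ξ c) := by
        apply div_pos (by nlinarith) (by linarith)
      have t2 : 0 ≤ θ * c * (lam - lamt) / (4 * η * ξ c) := by positivity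
      have t3 : 0 ≤ (lam - lamt) / (2 * η) := by positivity
      linarith
  -- the key monotone quantity
  have key : ∀ c ∈ Set.Ioi ct, ∀ c' ∈ Set.Ioi ct, c < c' →
      Real.log (Real.sqrt ((η + ξ c) / (η - ξ c)) * (Real.sqrt (Γ c + 1) + Real.sqrt (Γ c)))
      < Real.log (Real.sqrt ((η + ξ c') / (η - ξ c')) * (Real.sqrt (Γ c' + 1) + Real.sqrt (Γ c'))) := by
    intro c hc c' hc' hcc
    obtain ⟨hm, hv, hG, hΓpos⟩ := hfacts c hc
    obtain ⟨hm', hv', hG', hΓpos'⟩ := hfacts c' hc'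
    have hξlt : ξ c < ξ c' := by
      refine ((hfun_mono hηpos).lt_iff_lt hm hm').mp ?_
      rw [hv, hv']
      exact (mul_lt_mul_iff_right₀ hθpos).mpr hcc
    have hΓlt : Γ c < Γ c' := by
      rw [hG, hG']
      exact (Gfun_mono hηpos hk hb) hm hm' hξlt
    have hp2 : 0 < η - ξ c := by linarith [hm.2]
    have hp2' : 0 < η - ξ c' := by linarith [hm'.2]
    have hp1 : 0 < η + ξ c := by linarith [hm.1]
    have hrpos : 0 < (η + ξ c) / (η - ξ c) := div_pos hp1 hp2
    have hrlt : (η + ξ c) / (η - ξ c) < (η + ξ c') / (η - ξ c') := by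
      rw [div_lt_div_iff₀ hp2 hp2']
      nlinarith
    have hs1 : Real.sqrt ((η + ξ c) / (η - ξ c)) < Real.sqrt ((η + ξ c') / (η - ξ c')) :=
      Real.sqrt_lt_sqrt hrpos.le hrlt
    have hs2 : Real.sqrt (Γ c + 1) + Real.sqrt (Γ c)
        < Real.sqrt (Γ c' + 1) + Real.sqrt (Γ c') :=
      add_lt_add (Real.sqrt_lt_sqrt (by linarith) (by linarith))
        (Real.sqrt_lt_sqrt hΓpos.le hΓlt)
    have hP : 0 < Real.sqrt ((η + ξ c) / (η - ξ c))
        * (Real.sqrt (Γ c + 1) + Real.sqrt (Γ c)) := by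
      apply mul_pos (Real.sqrt_pos.mpr hrpos)
      have : 0 < Real.sqrt (Γ c + 1) := Real.sqrt_pos.mpr (by linarith)
      have h0 : 0 ≤ Real.sqrt (Γ c) := Real.sqrt_nonneg _
      linarith
    apply Real.log_lt_log hP
    apply mul_lt_mul'' hs1 hs2 (Real.sqrt_nonneg _)
    positivity
  constructor
  · intro c hc c' hc' hcc
    rw [hxb2 c, hxb2 c']
    have := key c hc c' hc' hcc
    have hθi : 0 < 1 / θ := by positivity
    nlinarith
  · intro c hc c' hc' hcc
    rw [hxb1 c, hxb1 c']
    have := key c hc c' hc' hcc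
    have hθi : 0 < 1 / θ := by positivity
    nlinarith
end

section
/- For every c > 0 one has ξ(c) − c·ξ′(c) > 0, where ξ′(c) = (θ/2)·(η² − ξ(c)²)/ξ(c)²; consequently the function c ↦ c/ξ(c) is strictly increasing on (0, ∞). -/
open Real Filter Set

private lemma hasDerivAt_phi (η : ℝ) {x : ℝ} (h1 : 0 < η + x) (h2 : 0 < η - x) :
    HasDerivAt (fun y => 2*y^3/(η^2 - y^2) + 2*y - η*(Real.log (η+y) - Real.log (η-y)))
      (4*η^2*x^2/(η^2-x^2)^2) x := by
  have hne : η^2 - x^2 ≠ 0 := by nlinarith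
  have d1 : HasDerivAt (fun y : ℝ => 2*y^3) (6*x^2) x := by
    have := (hasDerivAt_pow 3 x).const_mul (2:ℝ)
    exact this.congr_deriv (by norm_num; ring)
  have d2 : HasDerivAt (fun y : ℝ => η^2 - y^2) (-(2*x)) x := by
    have := ((hasDerivAt_pow 2 x)).const_sub (η^2)
    exact this.congr_deriv (by norm_num)
  have d3 : HasDerivAt (fun y : ℝ => Real.log (η+y)) (1/(η+x)) x := by
    have := (((hasDerivAt_id x).const_add η).log (ne_of_gt h1))
    simpa using this
  have d4 : HasDerivAt (fun y : ℝ => Real.log (η-y)) (-1/(η-x)) x := by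
    have := (((hasDerivAt_id x).const_sub η).log (ne_of_gt h2))
    simpa using this
  have d5 : HasDerivAt (fun y : ℝ => 2*y) (2:ℝ) x := by
    simpa using (hasDerivAt_id x).const_mul (2:ℝ)
  have := ((d1.div d2 hne).add d5).sub (((d3.sub d4)).const_mul η)
  refine this.congr_deriv ?_
  have := h1.ne'; have := h2.ne'
  field_simp
  ring

private lemma phi_pos (η : ℝ) (hη : 0 < η) {x : ℝ} (hx0 : 0 < x) (hxη : x < η) :
    η*(Real.log (η+x) - Real.log (η-x)) - 2*x < 2*x^3/(η^2 - x^2) := by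
  set φ : ℝ → ℝ := fun y => 2*y^3/(η^2 - y^2) + 2*y - η*(Real.log (η+y) - Real.log (η-y)) with hφ
  have hmono : StrictMonoOn φ (Set.Ico 0 η) := by
    apply strictMonoOn_of_deriv_pos (convex_Ico 0 η)
    · intro y hy
      have h1 : 0 < η + y := by cases hy with | intro a b => linarith
      have h2 : 0 < η - y := by cases hy with | intro a b => linarith
      exact (hasDerivAt_phi η h1 h2).continuousAt.continuousWithinAt
    · intro y hy
      rw [interior_Ico] at hy
      obtain ⟨hy0, hyη⟩ := hy
      have h1 : 0 < η + y := by linarith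
      have h2 : 0 < η - y := by linarith
      rw [(hasDerivAt_phi η h1 h2).deriv]
      have hp1 : 0 < η^2 - y^2 := by nlinarith
      have hp2 : (0:ℝ) < 4*η^2*y^2 := by
        have e1 := pow_pos hη 2
        have e2 := pow_pos hy0 2
        nlinarith
      exact div_pos hp2 (by positivity)
  have h0 : φ 0 = 0 := by simp [hφ]
  have hlt : φ 0 < φ x := hmono ⟨le_refl 0, hη⟩ ⟨le_of_lt hx0, hxη⟩ hx0
  rw [h0] at hlt
  simp only [hφ] at hlt
  linarith

private lemma hasDerivAt_h (η : ℝ) {x : ℝ} (h1 : 0 < η + x) (h2 : 0 < η - x) :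
    HasDerivAt (fun y => η*(Real.log (η+y) - Real.log (η-y)) - 2*y)
      (2*x^2/(η^2-x^2)) x := by
  have hne : η^2 - x^2 ≠ 0 := by nlinarith
  have d3 : HasDerivAt (fun y : ℝ => Real.log (η+y)) (1/(η+x)) x := by
    simpa using (((hasDerivAt_id x).const_add η).log (ne_of_gt h1))
  have d4 : HasDerivAt (fun y : ℝ => Real.log (η-y)) (-1/(η-x)) x := by
    simpa using (((hasDerivAt_id x).const_sub η).log (ne_of_gt h2))
  have d5 : HasDerivAt (fun y : ℝ => 2*y) (2:ℝ) x := by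
    simpa using (hasDerivAt_id x).const_mul (2:ℝ)
  have := (((d3.sub d4)).const_mul η).sub d5
  refine this.congr_deriv ?_
  have := h1.ne'; have := h2.ne'
  field_simp
  ring

private lemma h_mono (η : ℝ) (hη : 0 < η) :
    StrictMonoOn (fun y => η*(Real.log (η+y) - Real.log (η-y)) - 2*y) (Set.Ico 0 η) := by
  apply strictMonoOn_of_deriv_pos (convex_Ico 0 η)
  · intro y hy
    have h1 : 0 < η + y := by cases hy with | intro a b => linarith
    have h2 : 0 < η - y := by cases hy with | intro a b => linarith
    exact (hasDerivAt_h η h1 h2).continuousAt.continuousWithinAt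
  · intro y hy
    rw [interior_Ico] at hy
    obtain ⟨hy0, hyη⟩ := hy
    have h1 : 0 < η + y := by linarith
    have h2 : 0 < η - y := by linarith
    rw [(hasDerivAt_h η h1 h2).deriv]
    have : 0 < η^2 - y^2 := by nlinarith
    positivity

private lemma psi_mono (η : ℝ) (hη : 0 < η) :
    StrictMonoOn (fun y => (η*(Real.log (η+y) - Real.log (η-y)) - 2*y)/y) (Set.Ioo 0 η) := by
  apply strictMonoOn_of_deriv_pos (convex_Ioo 0 η)
  · intro y hy
    obtain ⟨hy0, hyη⟩ := hy
    have h1 : 0 < η + y := by linarith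
    have h2 : 0 < η - y := by linarith
    exact ((hasDerivAt_h η h1 h2).div (hasDerivAt_id y) (ne_of_gt hy0)).continuousAt.continuousWithinAt
  · intro y hy
    rw [interior_Ioo] at hy
    obtain ⟨hy0, hyη⟩ := hy
    have h1 : 0 < η + y := by linarith
    have h2 : 0 < η - y := by linarith
    have hne : η^2 - y^2 > 0 := by nlinarith
    have hd := (hasDerivAt_h η h1 h2).div (hasDerivAt_id y) (ne_of_gt hy0)
    simp only [id_eq] at hd
    rw [show (fun y => (η*(Real.log (η+y) - Real.log (η-y)) - 2*y)/y) = ((fun y => η*(Real.log (η+y) - Real.log (η-y)) - 2*y) / id) from rfl, hd.deriv]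
    apply div_pos
    · have key := phi_pos η hη hy0 hyη
      have h2x : 2*y^2/(η^2-y^2)*y = 2*y^3/(η^2-y^2) := by
        field_simp
      rw [h2x]
      linarith
    · positivity

/-- For every `c > 0`, `ξ(c) − c·ξ′(c) > 0` (with
`ξ′(c) = (θ/2)(η² − ξ(c)²)/ξ(c)²`); consequently `c ↦ c/ξ(c)` is strictly
increasing on `(0, ∞)`. -/
theorem stmt_17 (η θ : ℝ) (hη : 0 < η) (hθ : 0 < θ) (ξ : ℝ → ℝ)
    (hξ : ∀ c : ℝ, 0 < c → ξ c ∈ Set.Ioo 0 η ∧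
      2 * ξ c + θ * c - η * Real.log ((η + ξ c) / (η - ξ c)) = 0) :
    (∀ c : ℝ, 0 < c →
      0 < ξ c - c * ((θ / 2) * (η ^ 2 - (ξ c) ^ 2) / (ξ c) ^ 2)) ∧
    StrictMonoOn (fun c => c / ξ c) (Set.Ioi 0) := by
  -- rewrite equation with log difference
  have heq : ∀ c : ℝ, 0 < c →
      θ * c = η*(Real.log (η + ξ c) - Real.log (η - ξ c)) - 2 * ξ c := by
    intro c hc
    obtain ⟨⟨h0, h1⟩, heq⟩ := hξ c hc
    have hp : 0 < η + ξ c := by linarith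
    have hm : 0 < η - ξ c := by linarith
    rw [Real.log_div (ne_of_gt hp) (ne_of_gt hm)] at heq
    linarith
  constructor
  · intro c hc
    obtain ⟨⟨h0, h1⟩, _⟩ := hξ c hc
    have hne : 0 < η^2 - (ξ c)^2 := by nlinarith
    have key := phi_pos η hη h0 h1
    have hθc := heq c hc
    have key2 : (η*(Real.log (η + ξ c) - Real.log (η - ξ c)) - 2 * ξ c) * (η^2 - (ξ c)^2)
        < 2*(ξ c)^3 := (lt_div_iff₀ hne).mp key
    have hrw : c * ((θ / 2) * (η ^ 2 - (ξ c) ^ 2) / (ξ c) ^ 2)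
        = (θ * c) * (η^2 - (ξ c)^2) / (2 * (ξ c)^2) := by
      field_simp
    rw [hrw, hθc, sub_pos, div_lt_iff₀ (by positivity)]
    nlinarith
  · intro a ha b hb hab
    simp only [Set.mem_Ioi] at ha hb
    obtain ⟨⟨ha0, ha1⟩, _⟩ := hξ a ha
    obtain ⟨⟨hb0, hb1⟩, _⟩ := hξ b hb
    have heqa := heq a ha
    have heqb := heq b hb
    -- ξ a < ξ b
    have hξab : ξ a < ξ b := by
      by_contra hle
      push_neg at hle
      rcases lt_or_eq_of_le hle with hlt | heqq
      · have := h_mono η hη ⟨le_of_lt hb0, hb1⟩ ⟨le_of_lt ha0, ha1⟩ hlt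
        simp only at this
        nlinarith
      · rw [heqq] at heqb
        nlinarith
    have hpsi := psi_mono η hη ⟨ha0, ha1⟩ ⟨hb0, hb1⟩ hξab
    simp only at hpsi
    rw [← heqa, ← heqb] at hpsi
    -- θ*a/ξ a < θ*b/ξ b, divide by θ
    simp only
    rw [div_lt_div_iff₀ ha0 hb0]
    rw [div_lt_div_iff₀ ha0 hb0] at hpsi
    nlinarith
end

section
/- Assume λ = λ̃ and c̃ > 0. Then for i, j ∈ {1,2} with i ≠ j: lim_{c→c̃⁺} x̄ᵢ(c) = lim_{c→c̃⁺} x_j*(c) = s̃ + ((−1)^i/(2θ))·log((η + ξ(c̃))/(η − ξ(c̃))), where ξ(c̃) is the unique zero in (0, η) of F_{c̃}. -/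
open Real Filter Set

private lemma log_tendsto_helper {L : Filter ℝ} {g G : ℝ → ℝ} {a : ℝ} (ha : 0 < a)
    (hg : Tendsto g L (nhds a)) (hG : Tendsto G L (nhds 0)) :
    Tendsto (fun c => Real.log (Real.sqrt (g c) * (Real.sqrt (G c + 1) + Real.sqrt (G c))))
      L (nhds (Real.log a / 2)) := by
  have hsa : Tendsto (fun c => Real.sqrt (g c)) L (nhds (Real.sqrt a)) :=
    (Real.continuous_sqrt.tendsto a).comp hg
  have hG1 : Tendsto (fun c => Real.sqrt (G c + 1)) L (nhds 1) := by
    have := (Real.continuous_sqrt.tendsto ((0:ℝ)+1)).comp (hG.add_const 1)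
    simpa [Function.comp_def] using this
  have hG0 : Tendsto (fun c => Real.sqrt (G c)) L (nhds 0) := by
    have := (Real.continuous_sqrt.tendsto (0:ℝ)).comp hG
    simpa [Function.comp_def] using this
  have hprod : Tendsto (fun c => Real.sqrt (g c) * (Real.sqrt (G c + 1) + Real.sqrt (G c)))
      L (nhds (Real.sqrt a)) := by
    have := hsa.mul (hG1.add hG0)
    simpa using this
  have hne : Real.sqrt a ≠ 0 := by positivity
  have h2 := (Real.continuousAt_log hne).tendsto.comp hprod
  rw [Real.log_sqrt ha.le] at h2
  exact h2

private lemma xi_cont {θ η ct : ℝ} (hθ : 0 < θ) (hη : 0 < η) (hct : 0 < ct)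
    {ξ : ℝ → ℝ}
    (hξ : ∀ c : ℝ, 0 < c → ξ c ∈ Set.Ioo 0 η ∧
      2 * ξ c + θ * c - η * Real.log ((η + ξ c) / (η - ξ c)) = 0) :
    Tendsto ξ (nhdsWithin ct (Set.Ioi ct)) (nhds (ξ ct)) := by
  set G : ℝ → ℝ := fun x => 2*x - η * Real.log (η + x) + η * Real.log (η - x) with hGdef
  have hderiv : ∀ x ∈ Set.Ioo 0 η, HasDerivAt G (2 - η/(η+x) - η/(η-x)) x := by
    intro x hx
    have hx1 : (0:ℝ) < η + x := by linarith [hx.1]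
    have hx2 : (0:ℝ) < η - x := by linarith [hx.2]
    have d1 : HasDerivAt (fun y => Real.log (η + y)) (1/(η+x)) x := by
      have := (((hasDerivAt_id x).const_add η).log hx1.ne')
      simpa using this
    have d2 : HasDerivAt (fun y => Real.log (η - y)) ((-1)/(η-x)) x := by
      have := (((hasDerivAt_id x).const_sub η).log hx2.ne')
      simpa using this
    have dA : HasDerivAt (fun y : ℝ => 2*y) 2 x := by
      simpa using (hasDerivAt_id x).const_mul 2
    have dG := (dA.sub (d1.const_mul η)).add (d2.const_mul η)
    refine dG.congr_deriv ?_
    ring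
  have hanti : StrictAntiOn G (Set.Ioo 0 η) := by
    apply strictAntiOn_of_deriv_neg (convex_Ioo 0 η)
    · intro x hx
      exact (hderiv x hx).differentiableAt.continuousAt.continuousWithinAt
    · intro x hx
      rw [interior_Ioo] at hx
      rw [(hderiv x hx).deriv]
      have hx1 : (0:ℝ) < η + x := by linarith [hx.1]
      have hx2 : (0:ℝ) < η - x := by linarith [hx.2]
      have key : η/(η+x) + η/(η-x) = 2*η^2/((η+x)*(η-x)) := by
        field_simp; ring
      have h2 : (2:ℝ) < 2*η^2/((η+x)*(η-x)) := by
        rw [lt_div_iff₀ (by positivity)]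
        nlinarith [hx.1, hx.2]
      linarith [key ▸ h2]
  have hGeq : ∀ c : ℝ, 0 < c → G (ξ c) = -(θ * c) := by
    intro c hc
    obtain ⟨hmem, heq⟩ := hξ c hc
    have hp1 : (0:ℝ) < η + ξ c := by linarith [hmem.1]
    have hp2 : (0:ℝ) < η - ξ c := by linarith [hmem.2]
    have hlog : Real.log ((η + ξ c) / (η - ξ c)) = Real.log (η + ξ c) - Real.log (η - ξ c) :=
      Real.log_div hp1.ne' hp2.ne'
    rw [hlog] at heq
    simp only [hGdef]
    linarith
  rw [Metric.tendsto_nhdsWithin_nhds]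
  intro ε hε
  obtain ⟨hmem0, -⟩ := hξ ct hct
  set x0 := ξ ct with hx0def
  have hE0 : G x0 = -(θ * ct) := hGeq ct hct
  set e := min ε ((η - x0)/2) with hedef
  have he : 0 < e := lt_min hε (by linarith [hmem0.2])
  have hy : x0 + e ∈ Set.Ioo 0 η := by
    constructor
    · linarith [hmem0.1]
    · have := min_le_right ε ((η - x0)/2)
      have : e ≤ (η - x0)/2 := this
      linarith [hmem0.2]
  have hGy : G (x0 + e) < G x0 := hanti hmem0 hy (by linarith)
  refine ⟨(G x0 - G (x0 + e))/θ, div_pos (by linarith) hθ, ?_⟩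
  intro c hc hdist
  have hcct : ct < c := hc
  have hcpos : 0 < c := lt_trans hct hcct
  obtain ⟨hmemc, -⟩ := hξ c hcpos
  have hEc : G (ξ c) = -(θ * c) := hGeq c hcpos
  have hdist' : c - ct < (G x0 - G (x0 + e))/θ := by
    rw [Real.dist_eq, abs_of_pos (by linarith)] at hdist
    exact hdist
  have hlow : x0 < ξ c := by
    have : G (ξ c) < G x0 := by
      rw [hEc, hE0]
      nlinarith
    exact (hanti.lt_iff_gt hmemc hmem0).1 this
  have hhigh : ξ c < x0 + e := by
    have h1 : (c - ct) * θ < G x0 - G (x0 + e) := (lt_div_iff₀ hθ).1 hdist'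
    have h2 : G (x0 + e) < G (ξ c) := by
      rw [hEc]; nlinarith [hE0]
    exact (hanti.lt_iff_gt hy hmemc).1 h2
  rw [Real.dist_eq, abs_of_pos (by linarith)]
  have := min_le_left ε ((η - x0)/2)
  linarith



/-- With λ = λ̃ and c̃ > 0, as c → c̃⁺ one has
x̄₁(c), x₂*(c) → s̃ − (1/(2θ))·log((η+ξ(c̃))/(η−ξ(c̃))) and
x̄₂(c), x₁*(c) → s̃ + (1/(2θ))·log((η+ξ(c̃))/(η−ξ(c̃))). -/
theorem stmt_19
    (ρ σ lam lamt ct s1 s2 : ℝ) (hρ : 0 < ρ) (hσ : 0 < σ)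
    (h1 : 0 < 1 - lam * ρ) (h2 : lamt ≤ lam) (h3 : 0 ≤ lamt)
    (h5 : 0 ≤ ct) (h8 : s1 < s2)
    (θ η st : ℝ) (hθ : θ = Real.sqrt (2 * ρ / σ ^ 2))
    (hη : η = (1 - lam * ρ) / ρ) (hst : st = (s1 + s2) / 2)
    (ξ : ℝ → ℝ)
    (hξ : ∀ c : ℝ, 0 < c → ξ c ∈ Set.Ioo 0 η ∧
      2 * ξ c + θ * c - η * Real.log ((η + ξ c) / (η - ξ c)) = 0)
    (Γ : ℝ → ℝ)
    (hΓ : ∀ c : ℝ, Γ c = θ * (c - ct) / (4 * ξ c)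
      + θ * c * (lam - lamt) / (4 * η * ξ c) + (lam - lamt) / (2 * η))
    (xb1 xb2 xs1 xs2 : ℝ → ℝ)
    (hxb1 : ∀ c : ℝ, xb1 c = st - (1 / θ) * Real.log
      (Real.sqrt ((η + ξ c) / (η - ξ c)) * (Real.sqrt (Γ c + 1) + Real.sqrt (Γ c))))
    (hxb2 : ∀ c : ℝ, xb2 c = st + (1 / θ) * Real.log
      (Real.sqrt ((η + ξ c) / (η - ξ c)) * (Real.sqrt (Γ c + 1) + Real.sqrt (Γ c))))
    (hxs1 : ∀ c : ℝ, xs1 c = st - (1 / θ) * Real.log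
      (Real.sqrt ((η - ξ c) / (η + ξ c)) * (Real.sqrt (Γ c + 1) + Real.sqrt (Γ c))))
    (hxs2 : ∀ c : ℝ, xs2 c = st + (1 / θ) * Real.log
      (Real.sqrt ((η - ξ c) / (η + ξ c)) * (Real.sqrt (Γ c + 1) + Real.sqrt (Γ c))))
    (A21 A22 : ℝ → ℝ)
    (hA21 : ∀ c : ℝ, A21 c = Real.exp (-(θ * st))
      * (Real.sqrt (η ^ 2 - (ξ c) ^ 2) / (2 * θ))
      * (Real.sqrt (Γ c + 1) - Real.sqrt (Γ c)))
    (hA22 : ∀ c : ℝ, A22 c = Real.exp (θ * st)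
      * (Real.sqrt (η ^ 2 - (ξ c) ^ 2) / (2 * θ))
      * (-Real.sqrt (Γ c + 1) - Real.sqrt (Γ c)))
    (hll : lam = lamt) (hct : 0 < ct) :
    Filter.Tendsto xb1 (nhdsWithin ct (Set.Ioi ct))
      (nhds (st - (1 / (2 * θ)) * Real.log ((η + ξ ct) / (η - ξ ct)))) ∧
    Filter.Tendsto xs2 (nhdsWithin ct (Set.Ioi ct))
      (nhds (st - (1 / (2 * θ)) * Real.log ((η + ξ ct) / (η - ξ ct)))) ∧
    Filter.Tendsto xb2 (nhdsWithin ct (Set.Ioi ct))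
      (nhds (st + (1 / (2 * θ)) * Real.log ((η + ξ ct) / (η - ξ ct)))) ∧
    Filter.Tendsto xs1 (nhdsWithin ct (Set.Ioi ct))
      (nhds (st + (1 / (2 * θ)) * Real.log ((η + ξ ct) / (η - ξ ct)))) := by
  -- basic positivity
  have hθpos : 0 < θ := by
    rw [hθ]; exact Real.sqrt_pos.mpr (by positivity)
  have hηpos : 0 < η := by
    rw [hη]; exact div_pos h1 hρ
  obtain ⟨hmemct, -⟩ := hξ ct hct
  have hk1 : 0 < ξ ct := hmemct.1
  have hk2 : ξ ct < η := hmemct.2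
  have hp1 : 0 < η + ξ ct := by linarith
  have hp2 : 0 < η - ξ ct := by linarith
  have hr : 0 < (η + ξ ct) / (η - ξ ct) := div_pos hp1 hp2
  have hr' : 0 < (η - ξ ct) / (η + ξ ct) := div_pos hp2 hp1
  have hxiT : Tendsto ξ (nhdsWithin ct (Set.Ioi ct)) (nhds (ξ ct)) :=
    xi_cont hθpos hηpos hct hξ
  -- Γ tends to 0
  have hΓeq : Γ = fun c => θ * (c - ct) / (4 * ξ c) := by
    funext c
    rw [hΓ c, hll]
    simp
  have hidT : Tendsto (fun c : ℝ => c) (nhdsWithin ct (Set.Ioi ct)) (nhds ct) :=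
    tendsto_id.mono_left nhdsWithin_le_nhds
  have hΓT : Tendsto Γ (nhdsWithin ct (Set.Ioi ct)) (nhds 0) := by
    rw [hΓeq]
    have hnum : Tendsto (fun c : ℝ => θ * (c - ct)) (nhdsWithin ct (Set.Ioi ct)) (nhds 0) := by
      have := (hidT.sub_const ct).const_mul θ
      simpa using this
    have hden : Tendsto (fun c : ℝ => 4 * ξ c) (nhdsWithin ct (Set.Ioi ct)) (nhds (4 * ξ ct)) :=
      hxiT.const_mul 4
    have := hnum.div hden (by positivity)
    simpa [Pi.div_def] using this
  -- ratio tendstos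
  have hgA : Tendsto (fun c => (η + ξ c) / (η - ξ c)) (nhdsWithin ct (Set.Ioi ct))
      (nhds ((η + ξ ct) / (η - ξ ct))) :=
    (tendsto_const_nhds.add hxiT).div (tendsto_const_nhds.sub hxiT) hp2.ne'
  have hgB : Tendsto (fun c => (η - ξ c) / (η + ξ c)) (nhdsWithin ct (Set.Ioi ct))
      (nhds ((η - ξ ct) / (η + ξ ct))) :=
    (tendsto_const_nhds.sub hxiT).div (tendsto_const_nhds.add hxiT) hp1.ne'
  have hLA := log_tendsto_helper hr hgA hΓT
  have hLB := log_tendsto_helper hr' hgB hΓT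
  have hlogB : Real.log ((η - ξ ct) / (η + ξ ct)) = -Real.log ((η + ξ ct) / (η - ξ ct)) := by
    rw [← Real.log_inv, inv_div]
  rw [hlogB] at hLB
  have hθne : θ ≠ 0 := hθpos.ne'
  have keyA : st - 1 / (2 * θ) * Real.log ((η + ξ ct) / (η - ξ ct))
      = st - 1 / θ * (Real.log ((η + ξ ct) / (η - ξ ct)) / 2) := by
    field_simp
  have keyB : st + 1 / (2 * θ) * Real.log ((η + ξ ct) / (η - ξ ct))
      = st + 1 / θ * (Real.log ((η + ξ ct) / (η - ξ ct)) / 2) := by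
    field_simp
  refine ⟨?_, ?_, ?_, ?_⟩
  · have h := (hLA.const_mul (1 / θ)).const_sub st
    rw [keyA]
    have hfun : xb1 = fun c => st - 1 / θ * Real.log
        (Real.sqrt ((η + ξ c) / (η - ξ c)) * (Real.sqrt (Γ c + 1) + Real.sqrt (Γ c))) := by
      funext c; exact hxb1 c
    rw [hfun]
    exact h
  · have h := (hLB.const_mul (1 / θ)).const_add st
    rw [keyA]
    have hfun : xs2 = fun c => st + 1 / θ * Real.log
        (Real.sqrt ((η - ξ c) / (η + ξ c)) * (Real.sqrt (Γ c + 1) + Real.sqrt (Γ c))) := by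
      funext c; exact hxs2 c
    rw [hfun]
    convert h using 2
    ring
  · have h := (hLA.const_mul (1 / θ)).const_add st
    rw [keyB]
    have hfun : xb2 = fun c => st + 1 / θ * Real.log
        (Real.sqrt ((η + ξ c) / (η - ξ c)) * (Real.sqrt (Γ c + 1) + Real.sqrt (Γ c))) := by
      funext c; exact hxb2 c
    rw [hfun]
    exact h
  · have h := (hLB.const_mul (1 / θ)).const_sub st
    rw [keyB]
    have hfun : xs1 = fun c => st - 1 / θ * Real.log
        (Real.sqrt ((η - ξ c) / (η + ξ c)) * (Real.sqrt (Γ c + 1) + Real.sqrt (Γ c))) := by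
      funext c; exact hxs1 c
    rw [hfun]
    convert h using 2
    ring
end
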